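/- arXiv:2504.04799 — 8 statements merged into one kernel-verified Lean document; each statement's English description precedes it below -/
import Mathlib

section
/- Let L be a symmetric positive definite n×n real matrix, c > 0, and g ∈ ℝ. Then for all s ≤ t, ∫_s^t g² • (exp(−c(t−τ) • L) * exp(−c(t−τ) • L)ᵀ) dτ = (g²/(2c)) • ((I − exp(−2c(t−s) • L)) * L⁻¹). (This is the conditional covariance K_{t|s} of the topological stochastic heat diffusion with Brownian-motion noise, dY = −cLY dt + g dW, whose transition matrix is Ψ(t,s) = exp(−c(t−s)L).) -/
open MeasureTheory Matrix NormedSpace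

section aux

attribute [local instance] Matrix.linftyOpNormedRing Matrix.linftyOpNormedAlgebra

lemma tsheat_aux_hasDerivAt {n : ℕ} (L : Matrix (Fin n) (Fin n) ℝ) (hdet : IsUnit L.det)
    (c : ℝ) (hc : 0 < c) (g t : ℝ) (τ : ℝ) :
    Filter.Tendsto
      (slope (fun τ : ℝ => (g ^ 2 / (2 * c)) • (exp ((-(2 * c * (t - τ))) • L) * L⁻¹)) τ)
      (nhdsWithin τ {τ}ᶜ) (nhds (g ^ 2 • exp ((-(2 * c * (t - τ))) • L))) := by
  refine hasDerivAt_iff_tendsto_slope.mp ?_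
  have hu : HasDerivAt (fun τ : ℝ => -(2 * c * (t - τ))) (2 * c) τ := by
    have heq : (fun τ : ℝ => -(2 * c * (t - τ))) = fun τ : ℝ => 2 * c * τ - 2 * c * t := by
      funext τ; ring
    rw [heq]
    simpa using ((hasDerivAt_id τ).const_mul (2 * c)).sub_const (2 * c * t)
  have hd : HasDerivAt (fun τ : ℝ => exp ((-(2 * c * (t - τ))) • L))
      ((2 * c) • (exp ((-(2 * c * (t - τ))) • L) * L)) τ :=
    by have := hasDerivAt_exp_smul_const (𝕂 := ℝ) L (-(2 * c * (t - τ))); exact this.scomp τ hu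
  have hd2 := (hd.mul_const L⁻¹).fun_const_smul (g ^ 2 / (2 * c))
  convert hd2 using 1
  rw [smul_mul_assoc, mul_assoc _ L L⁻¹, Matrix.mul_nonsing_inv _ hdet, mul_one, smul_smul,
    div_mul_cancel₀]
  positivity

lemma tsheat_aux_continuous {n : ℕ} (L : Matrix (Fin n) (Fin n) ℝ) (c g t : ℝ) :
    Continuous (fun τ : ℝ => g ^ 2 • exp ((-(2 * c * (t - τ))) • L)) :=
  continuous_const.fun_smul (exp_continuous.comp
    ((Continuous.fun_neg (f := fun τ : ℝ => 2 * c * (t - τ)) (by fun_prop)).fun_smul continuous_const))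

end aux

attribute [local instance] Matrix.normedAddCommGroup Matrix.normedSpace

/-- Conditional covariance `K_{t|s}` of the topological stochastic heat diffusion with
Brownian-motion noise `dY = -cLY dt + g dW` (with `L` symmetric positive definite, `c > 0`):
for `s ≤ t`, `∫ s..t g² • (exp(-c(t-τ) • L) exp(-c(t-τ) • L)ᵀ) dτ
  = (g²/(2c)) • ((I - exp(-2c(t-s) • L)) L⁻¹)`. -/
theorem tsheat_bm_conditional_covariance {n : ℕ}
    (L : Matrix (Fin n) (Fin n) ℝ) (hL : L.IsSymm) (hLpd : L.PosDef)
    (c : ℝ) (hc : 0 < c) (g : ℝ) :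
    ∀ s t : ℝ, s ≤ t →
      (∫ τ in s..t, g ^ 2 •
          (exp ((-(c * (t - τ))) • L) * (exp ((-(c * (t - τ))) • L))ᵀ)) =
        (g ^ 2 / (2 * c)) • ((1 - exp ((-(2 * c * (t - s))) • L)) * L⁻¹) := by
  intro s t hst
  have hdet : IsUnit L.det := hLpd.det_pos.ne'.isUnit
  -- rewrite the integrand as `g² • exp(-(2c(t-τ)) • L)`
  have key : ∀ τ : ℝ,
      g ^ 2 • (exp ((-(c * (t - τ))) • L) * (exp ((-(c * (t - τ))) • L))ᵀ)
        = g ^ 2 • exp ((-(2 * c * (t - τ))) • L) := by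
    intro τ
    congr 1
    rw [← Matrix.exp_transpose, Matrix.transpose_smul, hL.eq,
      ← Matrix.exp_add_of_commute _ _ (Commute.refl _), ← add_smul]
    congr 2
    ring
  have hF : ∀ τ : ℝ,
      HasDerivAt (fun τ : ℝ => (g ^ 2 / (2 * c)) • (exp ((-(2 * c * (t - τ))) • L) * L⁻¹))
        (g ^ 2 • exp ((-(2 * c * (t - τ))) • L)) τ := by
    intro τ
    refine hasDerivAt_iff_tendsto_slope.mpr ?_
    exact tsheat_aux_hasDerivAt L hdet c hc g t τ
  have hcont : Continuous (fun τ : ℝ => g ^ 2 • exp ((-(2 * c * (t - τ))) • L)) :=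
    tsheat_aux_continuous L c g t
  simp only [key]
  rw [intervalIntegral.integral_eq_sub_of_hasDerivAt (fun τ _ => hF τ)
    (hcont.intervalIntegrable s t)]
  simp only [sub_self, mul_zero, neg_zero, zero_smul, exp_zero, one_mul]
  rw [Matrix.sub_mul, Matrix.one_mul, smul_sub]
end

section
/- Let L be a symmetric positive definite n×n real matrix, c > 0, and g ∈ ℝ. Then for all t₁, t₂ ≥ 0, ∫_0^{min(t₁,t₂)} g² • (exp(−c(t₁−τ) • L) * exp(−c(t₂−τ) • L)ᵀ) dτ = (g²/(2c)) • ((exp(−c|t₁−t₂| • L) − exp(−c(t₁+t₂) • L)) * L⁻¹). (This is the cross covariance K_{t₁t₂}, conditioned on Y₀, of the topological stochastic heat diffusion dY = −cLY dt + g dW.) -/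
open MeasureTheory Matrix NormedSpace

attribute [local instance] Matrix.normedAddCommGroup Matrix.normedSpace

private lemma tsheat_aux_deriv {n : ℕ} (A C : Matrix (Fin n) (Fin n) ℝ) (a b t s : ℝ) :
    HasDerivAt (fun τ : ℝ => s • (exp ((a + b*τ) • A) * C))
      (s • (b • (exp ((a + b*t) • A) * A * C))) t := by
  erw [hasDerivAt_iff_tendsto_slope]
  letI : SeminormedAddCommGroup (Matrix (Fin n) (Fin n) ℝ) := Matrix.linftyOpSeminormedAddCommGroup
  letI : NormedAddCommGroup (Matrix (Fin n) (Fin n) ℝ) := Matrix.linftyOpNormedAddCommGroup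
  letI : NormedSpace ℝ (Matrix (Fin n) (Fin n) ℝ) := Matrix.linftyOpNormedSpace
  letI : SeminormedRing (Matrix (Fin n) (Fin n) ℝ) := Matrix.linftyOpSemiNormedRing
  letI : NormedRing (Matrix (Fin n) (Fin n) ℝ) := Matrix.linftyOpNormedRing
  letI : NormedAlgebra ℝ (Matrix (Fin n) (Fin n) ℝ) := Matrix.linftyOpNormedAlgebra
  rw [← hasDerivAt_iff_tendsto_slope]
  have haff : HasDerivAt (fun τ : ℝ => a + b*τ) b t := by
    simpa using ((hasDerivAt_id t).const_mul b).const_add a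
  have h := hasDerivAt_exp_smul_const (𝕂 := ℝ) A (a + b*t)
  have h2 := ((HasDerivAt.scomp t h haff).mul_const C).const_smul s
  convert h2 using 1
  · funext τ; simp [smul_mul_assoc, mul_assoc, mul_comm]; rfl
  · simp [smul_mul_assoc, mul_assoc, mul_comm]; rfl

private lemma tsheat_aux_cont {n : ℕ} (A : Matrix (Fin n) (Fin n) ℝ) (a b : ℝ) :
    Continuous (fun τ : ℝ => exp ((a + b*τ) • A)) := by
  letI : SeminormedAddCommGroup (Matrix (Fin n) (Fin n) ℝ) := Matrix.linftyOpSeminormedAddCommGroup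
  letI : NormedAddCommGroup (Matrix (Fin n) (Fin n) ℝ) := Matrix.linftyOpNormedAddCommGroup
  letI : NormedSpace ℝ (Matrix (Fin n) (Fin n) ℝ) := Matrix.linftyOpNormedSpace
  letI : SeminormedRing (Matrix (Fin n) (Fin n) ℝ) := Matrix.linftyOpSemiNormedRing
  letI : NormedRing (Matrix (Fin n) (Fin n) ℝ) := Matrix.linftyOpNormedRing
  letI : NormedAlgebra ℝ (Matrix (Fin n) (Fin n) ℝ) := Matrix.linftyOpNormedAlgebra
  letI : NormedAlgebra ℚ (Matrix (Fin n) (Fin n) ℝ) := NormedAlgebra.restrictScalars ℚ ℝ _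
  exact exp_continuous.comp ((continuous_const.add (continuous_const.mul continuous_id)).smul continuous_const)

/-- Cross covariance `K_{t₁t₂}` (conditioned on `Y₀`) of the topological stochastic heat
diffusion `dY = -cLY dt + g dW` with `L` symmetric positive definite and `c > 0`: for
`t₁, t₂ ≥ 0`, `∫_0^{min(t₁,t₂)} g² • (exp(-c(t₁-τ) • L) exp(-c(t₂-τ) • L)ᵀ) dτ
  = (g²/(2c)) • ((exp(-c|t₁-t₂| • L) - exp(-c(t₁+t₂) • L)) L⁻¹)`. -/
theorem tsheat_bm_cross_covariance {n : ℕ}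
    (L : Matrix (Fin n) (Fin n) ℝ) (hL : L.IsSymm) (hLpd : L.PosDef)
    (c : ℝ) (hc : 0 < c) (g : ℝ) :
    ∀ t₁ t₂ : ℝ, 0 ≤ t₁ → 0 ≤ t₂ →
      (∫ τ in (0:ℝ)..min t₁ t₂, g ^ 2 •
          (exp ((-(c * (t₁ - τ))) • L) * (exp ((-(c * (t₂ - τ))) • L))ᵀ)) =
        (g ^ 2 / (2 * c)) •
          ((exp ((-(c * |t₁ - t₂|)) • L) - exp ((-(c * (t₁ + t₂))) • L)) * L⁻¹) := by
  intro t₁ t₂ ht₁ ht₂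
  have hdet : IsUnit L.det := isUnit_iff_ne_zero.2 hLpd.det_pos.ne'
  have key : ∀ τ : ℝ, g ^ 2 • (exp ((-(c * (t₁ - τ))) • L) * (exp ((-(c * (t₂ - τ))) • L))ᵀ)
      = g ^ 2 • exp ((-(c * (t₁ + t₂)) + (2 * c) * τ) • L) := by
    intro τ
    have hT : (exp ((-(c * (t₂ - τ))) • L))ᵀ = exp ((-(c * (t₂ - τ))) • L) := by
      rw [← Matrix.exp_transpose, transpose_smul, hL.eq]
    have hcomm : Commute ((-(c * (t₁ - τ))) • L) ((-(c * (t₂ - τ))) • L) :=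
      ((Commute.refl L).smul_left _).smul_right _
    rw [hT, ← Matrix.exp_add_of_commute _ _ hcomm, ← add_smul]
    congr 2
    ring_nf
  simp only [key]
  have hder : ∀ τ ∈ Set.uIcc (0:ℝ) (min t₁ t₂), HasDerivAt
      (fun τ : ℝ => (g ^ 2 / (2 * c)) • (exp ((-(c * (t₁ + t₂)) + (2 * c) * τ) • L) * L⁻¹))
      (g ^ 2 • exp ((-(c * (t₁ + t₂)) + (2 * c) * τ) • L)) τ := by
    intro τ _
    have h := tsheat_aux_deriv L L⁻¹ (-(c * (t₁ + t₂))) (2 * c) τ (g ^ 2 / (2 * c))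
    have heq : (g ^ 2 / (2 * c)) • ((2 * c) • (exp ((-(c * (t₁ + t₂)) + (2 * c) * τ) • L) * L * L⁻¹))
        = g ^ 2 • exp ((-(c * (t₁ + t₂)) + (2 * c) * τ) • L) := by
      rw [mul_assoc, Matrix.mul_nonsing_inv L hdet, mul_one, smul_smul,
        div_mul_cancel₀ _ (by positivity : (2:ℝ) * c ≠ 0)]
    exact heq ▸ h
  letI : ENormedAddMonoid (Matrix (Fin n) (Fin n) ℝ) := NormedAddGroup.toENormedAddMonoid
  have hint : IntervalIntegrable
      (fun τ : ℝ => g ^ 2 • exp ((-(c * (t₁ + t₂)) + (2 * c) * τ) • L))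
      volume 0 (min t₁ t₂) :=
    (show Continuous (fun τ : ℝ => g ^ 2 • exp ((-(c * (t₁ + t₂)) + (2 * c) * τ) • L)) from
      (tsheat_aux_cont L (-(c * (t₁ + t₂))) (2 * c)).const_smul (g ^ 2 : ℝ)).intervalIntegrable 0 _
  rw [intervalIntegral.integral_eq_sub_of_hasDerivAt hder hint]
  have habs : -(c * (t₁ + t₂)) + (2 * c) * min t₁ t₂ = -(c * |t₁ - t₂|) := by
    rcases le_total t₁ t₂ with h | h
    · rw [min_eq_left h, abs_of_nonpos (sub_nonpos.2 h)]; ring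
    · rw [min_eq_right h, abs_of_nonneg (sub_nonneg.2 h)]; ring
  have h0 : -(c * (t₁ + t₂)) + (2 * c) * 0 = -(c * (t₁ + t₂)) := by ring
  rw [habs, h0, sub_mul, smul_sub]
end

section
/- Let L be a symmetric positive semidefinite n×n real matrix, c > 0, and 0 < σ_min < σ_max. Set g(τ) := σ_min (σ_max/σ_min)^τ √(2 ln(σ_max/σ_min)) and A := ln(σ_max/σ_min) • I + c • L. Then A is positive definite (hence invertible), and for all s ≤ t, ∫_s^t g(τ)² • (exp(−c(t−τ) • L) * exp(−c(t−τ) • L)ᵀ) dτ = σ_min² ln(σ_max/σ_min) • (exp(−2ct • L) * (exp(2t • A) − exp(2s • A)) * A⁻¹). (This is the conditional covariance K_{t|s} of the variance-exploding topological heat diffusion TSHeat_VE.) -/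
open MeasureTheory Matrix NormedSpace

section LinftyAux

attribute [local instance] Matrix.linftyOpNormedRing Matrix.linftyOpNormedAlgebra

/-- Entrywise derivative of `u ↦ r • (C * exp((2u)•A) * Ai)`, proved using the `L∞`-operator
norm structure on matrices (the statement is purely scalar, hence norm-independent). -/
lemma tsheat_aux_F_entry_deriv {n : ℕ} (C A Ai : Matrix (Fin n) (Fin n) ℝ) (r τ : ℝ)
    (i j : Fin n) :
    HasDerivAt (fun u : ℝ => (r • (C * exp ((2 * u) • A) * Ai)) i j)
      ((r • (C * ((2:ℝ) • (exp ((2 * τ) • A) * A)) * Ai)) i j) τ := by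
  have h0 : HasDerivAt (fun u : ℝ => exp (u • A)) (exp ((2 * τ) • A) * A) (2 * τ) :=
    hasDerivAt_exp_smul_const A (2 * τ)
  have h2 : HasDerivAt (fun u : ℝ => 2 * u) 2 τ := by
    simpa using (hasDerivAt_id τ).const_mul 2
  have h1 : HasDerivAt (fun u : ℝ => exp ((2 * u) • A))
      ((2:ℝ) • (exp ((2 * τ) • A) * A)) τ := h0.scomp τ h2
  have h3 := ((h1.const_mul C).mul_const Ai).const_smul r
  have hlin : IsLinearMap ℝ (fun M : Matrix (Fin n) (Fin n) ℝ => M i j) :=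
    ⟨fun a b => rfl, fun a b => rfl⟩
  let e : Matrix (Fin n) (Fin n) ℝ →L[ℝ] ℝ := LinearMap.toContinuousLinearMap hlin.mk'
  exact e.hasFDerivAt.comp_hasDerivAt τ h3

/-- Entrywise derivative of `u ↦ exp((2u)•A)`. -/
lemma tsheat_aux_exp_entry_deriv {n : ℕ} (A : Matrix (Fin n) (Fin n) ℝ) (τ : ℝ) (i j : Fin n) :
    HasDerivAt (fun u : ℝ => exp ((2 * u) • A) i j)
      (((2:ℝ) • (exp ((2 * τ) • A) * A)) i j) τ := by
  have h0 : HasDerivAt (fun u : ℝ => exp (u • A)) (exp ((2 * τ) • A) * A) (2 * τ) :=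
    hasDerivAt_exp_smul_const A (2 * τ)
  have h2 : HasDerivAt (fun u : ℝ => 2 * u) 2 τ := by
    simpa using (hasDerivAt_id τ).const_mul 2
  have h1 : HasDerivAt (fun u : ℝ => exp ((2 * u) • A))
      ((2:ℝ) • (exp ((2 * τ) • A) * A)) τ := h0.scomp τ h2
  have hlin : IsLinearMap ℝ (fun M : Matrix (Fin n) (Fin n) ℝ => M i j) :=
    ⟨fun a b => rfl, fun a b => rfl⟩
  let e : Matrix (Fin n) (Fin n) ℝ →L[ℝ] ℝ := LinearMap.toContinuousLinearMap hlin.mk'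
  exact e.hasFDerivAt.comp_hasDerivAt τ h1

end LinftyAux

attribute [local instance] Matrix.normedAddCommGroup Matrix.normedSpace

/-- A matrix-valued function has a derivative as soon as all its entries do (for the sup norm). -/
lemma tsheat_aux_hasDerivAt_of_entries {n : ℕ} {f : ℝ → Matrix (Fin n) (Fin n) ℝ}
    {f' : Matrix (Fin n) (Fin n) ℝ} {x : ℝ}
    (h : ∀ i j, HasDerivAt (fun t => f t i j) (f' i j) x) : HasDerivAt f f' x :=
  hasDerivAt_pi.2 fun i => hasDerivAt_pi.2 fun j => h i j

/-- `exp (r • 1) = exp r • 1` for real matrices. -/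
lemma tsheat_aux_exp_smul_one {n : ℕ} (r : ℝ) :
    exp (r • (1 : Matrix (Fin n) (Fin n) ℝ)) = Real.exp r • (1 : Matrix (Fin n) (Fin n) ℝ) := by
  rw [Matrix.smul_one_eq_diagonal, Matrix.exp_diagonal, Matrix.smul_one_eq_diagonal]
  funext i
  rw [Pi.exp_def]
  exact (Real.exp_eq_exp_ℝ ▸ rfl)

/-- Conditional covariance `K_{t|s}` of the variance-exploding topological heat diffusion
`TSHeat_VE`, `dY = -cLY dt + g(t) dW` with `g(τ) = σ_min (σ_max/σ_min)^τ √(2 ln(σ_max/σ_min))`,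
`L` symmetric positive semidefinite, `c > 0`, `0 < σ_min < σ_max`, and
`A = ln(σ_max/σ_min) • I + c • L`: `A` is positive definite, and for `s ≤ t`,
`∫ s..t g(τ)² • (exp(-c(t-τ) • L) exp(-c(t-τ) • L)ᵀ) dτ
  = σ_min² ln(σ_max/σ_min) • (exp(-2ct • L) (exp(2t • A) - exp(2s • A)) A⁻¹)`. -/
theorem tsheat_ve_conditional_covariance {n : ℕ}
    (L : Matrix (Fin n) (Fin n) ℝ) (hL : L.IsSymm) (hLpsd : L.PosSemidef)
    (c : ℝ) (hc : 0 < c) (σmin σmax : ℝ) (hσ0 : 0 < σmin) (hσ : σmin < σmax) :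
    let g : ℝ → ℝ := fun τ =>
      σmin * (σmax / σmin) ^ τ * Real.sqrt (2 * Real.log (σmax / σmin))
    let A : Matrix (Fin n) (Fin n) ℝ :=
      Real.log (σmax / σmin) • (1 : Matrix (Fin n) (Fin n) ℝ) + c • L
    A.PosDef ∧
      ∀ s t : ℝ, s ≤ t →
        (∫ τ in s..t, g τ ^ 2 •
            (exp ((-(c * (t - τ))) • L) * (exp ((-(c * (t - τ))) • L))ᵀ)) =
          (σmin ^ 2 * Real.log (σmax / σmin)) •
            (exp ((-(2 * c * t)) • L) * (exp ((2 * t) • A) - exp ((2 * s) • A)) * A⁻¹) := by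
  intro g A
  have hb : (0:ℝ) < σmax / σmin := div_pos (hσ0.trans hσ) hσ0
  have hl : 0 < Real.log (σmax / σmin) := Real.log_pos ((one_lt_div hσ0).2 hσ)
  have hAdef : A = Real.log (σmax / σmin) • (1 : Matrix (Fin n) (Fin n) ℝ) + c • L := rfl
  have hA : A.PosDef := by
    rw [hAdef]
    refine Matrix.PosDef.of_dotProduct_mulVec_pos (Matrix.IsHermitian.ext fun i j => ?_) fun x hx => ?_
    · simp only [Matrix.add_apply, Matrix.smul_apply, Matrix.one_apply, smul_eq_mul, star_trivial]
      rw [hL.apply i j]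
      rcases eq_or_ne i j with rfl | h
      · rfl
      · simp [h, Ne.symm h]
    · rw [add_mulVec, dotProduct_add, smul_mulVec, one_mulVec, dotProduct_smul,
        smul_mulVec, dotProduct_smul, smul_eq_mul, smul_eq_mul]
      exact add_pos_of_pos_of_nonneg (mul_pos hl (Matrix.dotProduct_star_self_pos_iff.2 hx))
        (mul_nonneg hc.le (hLpsd.dotProduct_mulVec_nonneg x))
  refine ⟨hA, fun s t hst => ?_⟩
  have hAinv : A * A⁻¹ = 1 :=
    Matrix.mul_nonsing_inv A ((Matrix.isUnit_iff_isUnit_det A).1 hA.isUnit)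
  have hmulL : ∀ x y : ℝ, exp (x • L) * exp (y • L) = exp ((x + y) • L) := by
    intro x y
    rw [add_smul]
    exact (Matrix.exp_add_of_commute _ _ (((Commute.refl L).smul_left x).smul_right y)).symm
  have htrans : ∀ x : ℝ, (exp (x • L))ᵀ = exp (x • L) := by
    intro x
    rw [← Matrix.exp_transpose, Matrix.transpose_smul, hL.eq]
  have hexpA : ∀ τ : ℝ, exp ((2 * τ) • A) =
      Real.exp (2 * τ * Real.log (σmax / σmin)) • exp ((2 * c * τ) • L) := by
    intro τ
    have hsplit : (2 * τ) • A =
        (2 * τ * Real.log (σmax / σmin)) • (1 : Matrix (Fin n) (Fin n) ℝ) + (2 * c * τ) • L := by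
      rw [hAdef, smul_add, smul_smul, smul_smul, show 2 * τ * c = 2 * c * τ from by ring]
    rw [hsplit, Matrix.exp_add_of_commute _ _ (((Commute.one_left L).smul_left _).smul_right _),
      tsheat_aux_exp_smul_one, smul_mul_assoc, one_mul]
  have hgsq : ∀ τ : ℝ, g τ ^ 2 =
      2 * σmin ^ 2 * Real.log (σmax / σmin) * Real.exp (2 * τ * Real.log (σmax / σmin)) := by
    intro τ
    show (σmin * (σmax / σmin) ^ τ * Real.sqrt (2 * Real.log (σmax / σmin))) ^ 2 = _
    rw [Real.rpow_def_of_pos hb, mul_pow, mul_pow,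
      Real.sq_sqrt (by positivity : (0:ℝ) ≤ 2 * Real.log (σmax / σmin)),
      ← Real.exp_nat_mul]
    rw [show ((2:ℕ):ℝ) * (Real.log (σmax / σmin) * τ) = 2 * τ * Real.log (σmax / σmin) from by
      push_cast; ring]
    ring
  have heq : ∀ τ : ℝ,
      g τ ^ 2 • (exp ((-(c * (t - τ))) • L) * (exp ((-(c * (t - τ))) • L))ᵀ) =
      (2 * σmin ^ 2 * Real.log (σmax / σmin)) •
        (exp ((-(2 * c * t)) • L) * exp ((2 * τ) • A)) := by
    intro τ
    rw [htrans, hmulL,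
      show -(c * (t - τ)) + -(c * (t - τ)) = -(2 * c * t) + 2 * c * τ from by ring,
      ← hmulL, hexpA, mul_smul_comm, smul_smul, hgsq, ← mul_smul_comm, mul_smul_comm]
  have hD : ∀ τ : ℝ,
      (σmin ^ 2 * Real.log (σmax / σmin)) •
        (exp ((-(2 * c * t)) • L) * ((2:ℝ) • (exp ((2 * τ) • A) * A)) * A⁻¹) =
      (2 * σmin ^ 2 * Real.log (σmax / σmin)) •
        (exp ((-(2 * c * t)) • L) * exp ((2 * τ) • A)) := by
    intro τ
    rw [mul_smul_comm, smul_mul_assoc, smul_smul,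
      mul_assoc (exp ((-(2 * c * t)) • L)) (exp ((2 * τ) • A) * A) A⁻¹,
      mul_assoc (exp ((2 * τ) • A)) A A⁻¹, hAinv, mul_one]
    congr 1
    ring
  have key : ∀ τ : ℝ, HasDerivAt
      (fun u : ℝ => (σmin ^ 2 * Real.log (σmax / σmin)) •
        (exp ((-(2 * c * t)) • L) * exp ((2 * u) • A) * A⁻¹))
      (g τ ^ 2 • (exp ((-(c * (t - τ))) • L) * (exp ((-(c * (t - τ))) • L))ᵀ)) τ := by
    intro τ
    rw [heq τ, ← hD τ]
    exact tsheat_aux_hasDerivAt_of_entries fun i j =>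
      tsheat_aux_F_entry_deriv (exp ((-(2 * c * t)) • L)) A A⁻¹
        (σmin ^ 2 * Real.log (σmax / σmin)) τ i j
  have hcont : Continuous fun τ : ℝ => (2 * σmin ^ 2 * Real.log (σmax / σmin)) •
      (exp ((-(2 * c * t)) • L) * exp ((2 * τ) • A)) := by
    have hexp : Continuous fun u : ℝ => exp ((2 * u) • A) :=
      continuous_pi fun i => continuous_pi fun j =>
        continuous_iff_continuousAt.2 fun τ => (tsheat_aux_exp_entry_deriv A τ i j).continuousAt
    exact ((continuous_const (y := exp ((-(2 * c * t)) • L))).matrix_mul hexp).const_smul (2 * σmin ^ 2 * Real.log (σmax / σmin))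
  have hint : @IntervalIntegrable _ _ (NormedAddCommGroup.toENormedAddCommMonoid).toENormedAddMonoid
      (fun τ => g τ ^ 2 • (exp ((-(c * (t - τ))) • L) * (exp ((-(c * (t - τ))) • L))ᵀ))
      MeasureTheory.volume s t := by
    rw [funext heq]
    exact hcont.intervalIntegrable s t
  have hFTC := intervalIntegral.integral_eq_sub_of_hasDerivAt (fun τ _ => key τ) hint
  rw [hFTC, mul_sub, sub_mul, smul_sub]
end

section
/- Let L be a symmetric positive semidefinite n×n real matrix, c > 0, and 0 < σ_min < σ_max. Set g(τ) := σ_min (σ_max/σ_min)^τ √(2 ln(σ_max/σ_min)) and A := ln(σ_max/σ_min) • I + c • L. Then for all t₁, t₂ ≥ 0, ∫_0^{min(t₁,t₂)} g(τ)² • (exp(−c(t₁−τ) • L) * exp(−c(t₂−τ) • L)ᵀ) dτ = σ_min² ln(σ_max/σ_min) • (exp(−c(t₁+t₂) • L) * (exp(2 min(t₁,t₂) • A) − I) * A⁻¹). (This is the cross covariance K_{t₁t₂}, conditioned on Y₀, of the variance-exploding topological heat diffusion TSHeat_VE.) -/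
open MeasureTheory Matrix NormedSpace

section LinftyAux

attribute [local instance] Matrix.linftyOpNormedRing Matrix.linftyOpNormedAlgebra

variable {n : ℕ}

private noncomputable instance tsheat_mat_complete :
    CompleteSpace (Matrix (Fin n) (Fin n) ℝ) :=
  inferInstance

private lemma tsheat_slope_exp_aux (B C D : Matrix (Fin n) (Fin n) ℝ) (t : ℝ) :
    Filter.Tendsto (slope (fun τ : ℝ => B * exp ((2 * τ) • C) * D) t)
      (nhdsWithin t {t}ᶜ)
      (nhds (B * ((2 : ℝ) • (C * exp ((2 * t) • C))) * D)) := by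
  have h1 : HasDerivAt (fun s : ℝ => exp (s • C)) (C * exp ((2 * t) • C)) (2 * t) :=
    hasDerivAt_exp_smul_const' C (2 * t)
  have h2 : HasDerivAt (fun τ : ℝ => 2 * τ) 2 t := by
    simpa using (hasDerivAt_id t).const_mul (2 : ℝ)
  have h4 := ((h1.scomp t h2).const_mul B).mul_const D
  exact hasDerivAt_iff_tendsto_slope.mp h4

private lemma tsheat_continuous_exp_smul_aux (C : Matrix (Fin n) (Fin n) ℝ) :
    Continuous (fun s : ℝ => exp (s • C)) :=
  exp_continuous.comp (continuous_id.smul continuous_const)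

private lemma tsheat_exp_smul_one_aux (s : ℝ) :
    exp (s • (1 : Matrix (Fin n) (Fin n) ℝ)) = Real.exp s • 1 := by
  rw [← Algebra.algebraMap_eq_smul_one, ← Algebra.algebraMap_eq_smul_one, Real.exp_eq_exp_ℝ]
  exact (algebraMap_exp_comm (𝕂 := ℝ) s).symm

end LinftyAux

attribute [local instance] Matrix.normedAddCommGroup Matrix.normedSpace

/-- Cross covariance `K_{t₁t₂}` (conditioned on `Y₀`) of the variance-exploding topological
heat diffusion `TSHeat_VE`, with `g(τ) = σ_min (σ_max/σ_min)^τ √(2 ln(σ_max/σ_min))`,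
`L` symmetric positive semidefinite, `c > 0`, `0 < σ_min < σ_max`, and
`A = ln(σ_max/σ_min) • I + c • L`: for `t₁, t₂ ≥ 0`,
`∫_0^{min(t₁,t₂)} g(τ)² • (exp(-c(t₁-τ) • L) exp(-c(t₂-τ) • L)ᵀ) dτ
  = σ_min² ln(σ_max/σ_min) • (exp(-c(t₁+t₂) • L) (exp(2 min(t₁,t₂) • A) - I) A⁻¹)`. -/
theorem tsheat_ve_cross_covariance {n : ℕ}
    (L : Matrix (Fin n) (Fin n) ℝ) (hL : L.IsSymm) (hLpsd : L.PosSemidef)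
    (c : ℝ) (hc : 0 < c) (σmin σmax : ℝ) (hσ0 : 0 < σmin) (hσ : σmin < σmax) :
    let g : ℝ → ℝ := fun τ =>
      σmin * (σmax / σmin) ^ τ * Real.sqrt (2 * Real.log (σmax / σmin))
    let A : Matrix (Fin n) (Fin n) ℝ :=
      Real.log (σmax / σmin) • (1 : Matrix (Fin n) (Fin n) ℝ) + c • L
    ∀ t₁ t₂ : ℝ, 0 ≤ t₁ → 0 ≤ t₂ →
      (∫ τ in (0:ℝ)..min t₁ t₂, g τ ^ 2 •
          (exp ((-(c * (t₁ - τ))) • L) * (exp ((-(c * (t₂ - τ))) • L))ᵀ)) =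
        (σmin ^ 2 * Real.log (σmax / σmin)) •
          (exp ((-(c * (t₁ + t₂))) • L) *
            (exp ((2 * min t₁ t₂) • A) - 1) * A⁻¹) := by
  intro g A t₁ t₂ ht₁ ht₂
  have hr : (1:ℝ) < σmax / σmin := (one_lt_div hσ0).mpr hσ
  have hr0 : (0:ℝ) < σmax / σmin := lt_trans one_pos hr
  set ℓ := Real.log (σmax / σmin) with hℓdef
  have hℓ : 0 < ℓ := Real.log_pos hr
  have hA : A = ℓ • (1 : Matrix (Fin n) (Fin n) ℝ) + c • L := rfl
  -- A is positive definite, hence invertible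
  have hApd : A.PosDef := by
    rw [Matrix.posDef_iff_dotProduct_mulVec]
    constructor
    · rw [Matrix.IsHermitian, Matrix.conjTranspose_eq_transpose_of_trivial, hA,
        Matrix.transpose_add, Matrix.transpose_smul, Matrix.transpose_smul,
        Matrix.transpose_one, hL]
    · intro x hx
      have hsx : star x = x := by simp
      have h2 : (0:ℝ) < dotProduct (star x) x :=
        dotProduct_star_self_pos_iff.mpr hx
      rw [hsx] at h2
      have h3 : (0:ℝ) ≤ dotProduct x (L *ᵥ x) := by
        have := (Matrix.posSemidef_iff_dotProduct_mulVec.mp hLpsd).2 x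
        rwa [hsx] at this
      rw [hsx, hA, Matrix.add_mulVec, Matrix.smul_mulVec, Matrix.smul_mulVec,
        Matrix.one_mulVec, dotProduct_add, dotProduct_smul,
        dotProduct_smul]
      have : (0:ℝ) < ℓ * dotProduct x x := mul_pos hℓ h2
      have h4 : (0:ℝ) ≤ c * dotProduct x (L *ᵥ x) := mul_nonneg hc.le h3
      simpa [smul_eq_mul] using add_pos_of_pos_of_nonneg this h4
  have hAdet : IsUnit A.det := (Matrix.isUnit_iff_isUnit_det A).mp hApd.isUnit
  have hAA : A * A⁻¹ = 1 := Matrix.mul_nonsing_inv A hAdet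
  set B := exp ((-(c * (t₁ + t₂))) • L) with hB
  -- exp addition on multiples of L
  have hmul : ∀ a b : ℝ, exp (a • L) * exp (b • L) = exp ((a + b) • L) := by
    intro a b
    rw [add_smul, Matrix.exp_add_of_commute _ _ (((Commute.refl L).smul_left a).smul_right b)]
  -- exp of multiples of A, split
  have hexpA : ∀ s : ℝ, exp (s • A) = Real.exp (s * ℓ) • exp ((s * c) • L) := by
    intro s
    have h1 : s • A = (s * ℓ) • (1 : Matrix (Fin n) (Fin n) ℝ) + (s * c) • L := by
      rw [hA, smul_add, smul_smul, smul_smul]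
    have h2 : Commute ((s * ℓ) • (1 : Matrix (Fin n) (Fin n) ℝ)) ((s * c) • L) :=
      ((Commute.one_left _).smul_left _).smul_right _
    rw [h1, Matrix.exp_add_of_commute _ _ h2, tsheat_exp_smul_one_aux,
      smul_mul_assoc, one_mul]
  -- commuting A with exp of its multiples
  have hAexp : ∀ s : ℝ, A * exp (s • A) = exp (s • A) * A := fun s =>
    ((Commute.refl A).smul_right s).exp_right
  -- scalar computation
  have hgsq : ∀ τ : ℝ, g τ ^ 2 = 2 * σmin ^ 2 * ℓ * Real.exp (2 * τ * ℓ) := by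
    intro τ
    have h1 : (σmax / σmin) ^ τ = Real.exp (ℓ * τ) := by
      rw [Real.rpow_def_of_pos hr0, hℓdef]
    have h2 : Real.sqrt (2 * ℓ) ^ 2 = 2 * ℓ :=
      Real.sq_sqrt (by positivity)
    show (σmin * (σmax / σmin) ^ τ * Real.sqrt (2 * ℓ)) ^ 2 = _
    rw [mul_pow, mul_pow, h2, h1, sq (Real.exp (ℓ * τ)), ← Real.exp_add,
      show ℓ * τ + ℓ * τ = 2 * τ * ℓ by ring]
    ring
  -- the key pointwise identity
  have key : ∀ τ : ℝ,
      g τ ^ 2 • (exp ((-(c * (t₁ - τ))) • L) * (exp ((-(c * (t₂ - τ))) • L))ᵀ)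
        = (σmin ^ 2 * ℓ) • (B * ((2 : ℝ) • (A * exp ((2 * τ) • A))) * A⁻¹) := by
    intro τ
    have hT : (exp ((-(c * (t₂ - τ))) • L))ᵀ = exp ((-(c * (t₂ - τ))) • L) := by
      rw [← Matrix.exp_transpose, Matrix.transpose_smul, hL]
    have hBA : B * ((2 : ℝ) • (A * exp ((2 * τ) • A))) * A⁻¹
        = (2 : ℝ) • (B * exp ((2 * τ) • A)) := by
      rw [hAexp, mul_smul_comm, smul_mul_assoc, Matrix.mul_assoc, Matrix.mul_assoc, hAA,
        Matrix.mul_one]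
    rw [hT, hmul, hBA, hexpA, mul_smul_comm, hB, hmul, smul_smul, smul_smul, hgsq,
      show (-(c * (t₁ - τ)) + -(c * (t₂ - τ))) = (-(c * (t₁ + t₂)) + 2 * τ * c) by ring]
    congr 1
    ring
  -- continuity of the integrand
  have hcont : Continuous (fun τ : ℝ =>
      g τ ^ 2 • (exp ((-(c * (t₁ - τ))) • L) * (exp ((-(c * (t₂ - τ))) • L))ᵀ)) := by
    have hce : Continuous (fun s : ℝ => exp (s • L)) := tsheat_continuous_exp_smul_aux L
    have h1 : Continuous (fun τ : ℝ => exp ((-(c * (t₁ - τ))) • L)) :=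
      hce.comp (by fun_prop)
    have h2 : Continuous (fun τ : ℝ => exp ((-(c * (t₂ - τ))) • L)) :=
      hce.comp (by fun_prop)
    have hgc : Continuous (fun τ : ℝ => g τ ^ 2) := by
      have : (fun τ : ℝ => g τ ^ 2) = fun τ => 2 * σmin ^ 2 * ℓ * Real.exp (2 * τ * ℓ) :=
        funext hgsq
      rw [this]; fun_prop
    exact hgc.smul (h1.matrix_mul h2.matrix_transpose)
  -- derivative of the antiderivative
  have hderiv : ∀ τ ∈ Set.uIcc (0:ℝ) (min t₁ t₂),
      HasDerivAt (fun τ : ℝ => (σmin ^ 2 * ℓ) • (B * exp ((2 * τ) • A) * A⁻¹))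
        (g τ ^ 2 • (exp ((-(c * (t₁ - τ))) • L) * (exp ((-(c * (t₂ - τ))) • L))ᵀ)) τ := by
    intro τ _
    have h0 : HasDerivAt (fun τ : ℝ => B * exp ((2 * τ) • A) * A⁻¹)
        (B * ((2 : ℝ) • (A * exp ((2 * τ) • A))) * A⁻¹) τ :=
      hasDerivAt_iff_tendsto_slope.mpr (tsheat_slope_exp_aux B A A⁻¹ τ)
    have h1 := h0.const_smul (σmin ^ 2 * ℓ)
    rw [key τ]
    exact h1
  rw [intervalIntegral.integral_eq_sub_of_hasDerivAt hderiv
    (hcont.intervalIntegrable 0 (min t₁ t₂))]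
  rw [mul_zero, zero_smul, exp_zero, Matrix.mul_one, ← smul_sub, ← Matrix.sub_mul,
    Matrix.mul_sub, Matrix.mul_one]
end

section
/- Fix n, K ≥ 1, a symmetric n×n real matrix L, continuous functions h_0, …, h_K : ℝ → ℝ with H_t := ∑_{k=0}^K h_k(t) • L^k, and a continuous function g : ℝ → ℝ. Write Ψ_t := exp(∫_0^t H_τ dτ) and define K(t) := Ψ_t * (∫_0^t g(τ)² • (Ψ_τ⁻¹ * Ψ_τ⁻¹) dτ) * Ψ_tᵀ. Then for every t, the matrix-valued function K has derivative H_t * K(t) + g(t)² • I + K(t) * H_tᵀ at t. -/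
open MeasureTheory Matrix NormedSpace

/-- Transfer a derivative through a linear map between finite-dimensional spaces
(possibly with distinct norm instances on the same carrier). -/
theorem hasDerivAt_transfer {E F : Type*} [NormedAddCommGroup E] [NormedSpace ℝ E]
    [NormedAddCommGroup F] [NormedSpace ℝ F] {f : ℝ → E} {f' : E} {t : ℝ}
    (h : HasDerivAt f f' t) (hfin : FiniteDimensional ℝ E)
    (e : E →ₗ[ℝ] F) :
    HasDerivAt (fun s => e (f s)) (e f') t := by
  haveI := hfin
  exact (LinearMap.toContinuousLinearMap e).hasFDerivAt.comp_hasDerivAt t h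


section AuxLinfty

attribute [local instance] Matrix.linftyOpNormedRing Matrix.linftyOpNormedAlgebra

set_option maxHeartbeats 1000000 in
set_option synthInstance.maxHeartbeats 200000 in
theorem aux_exp_deriv {n N : ℕ} (L : Matrix (Fin n) (Fin n) ℝ)
    (c : Fin N → ℝ → ℝ) (c' : Fin N → ℝ) (t : ℝ)
    (hc : ∀ k, HasDerivAt (c k) (c' k) t) :
    HasDerivAt (fun s => exp (∑ k : Fin N, c k s • L ^ (k : ℕ)))
      ((∑ k : Fin N, c' k • L ^ (k : ℕ)) * exp (∑ k : Fin N, c k t • L ^ (k : ℕ))) t := by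
  set S := Algebra.adjoin ℝ ({L} : Set (Matrix (Fin n) (Fin n) ℝ)) with hS
  letI instNR : NormedRing S := inferInstance
  letI instNA : NormedAlgebra ℝ S := inferInstance
  letI instNS : NormedSpace ℝ S := instNA.toNormedSpace
  have hmc : ∀ a b : S, a * b = b * a :=
    (Algebra.adjoinCommRingOfComm ℝ (by rintro a rfl b rfl; rfl)).mul_comm
  letI : NormedCommRing S := { instNR with mul_comm := hmc }
  haveI : IsTopologicalRing S := NonUnitalSeminormedRing.toIsTopologicalRing
  haveI : IsUniformAddGroup S := SeminormedAddCommGroup.to_isUniformAddGroup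
  haveI : CompleteSpace S := FiniteDimensional.complete ℝ S
  have hLmem : L ∈ S := Algebra.self_mem_adjoin_singleton ℝ L
  set e : Fin N → S := fun k => ⟨L ^ (k : ℕ), pow_mem hLmem _⟩ with he
  set F : ℝ → S := fun s => ∑ k, c k s • e k with hF
  set F' : S := ∑ k, c' k • e k with hF'
  have hFd : HasDerivAt F F' t := HasDerivAt.fun_sum fun k _ => (hc k).smul_const (e k)
  have hexp : HasDerivAt (fun s => exp (F s)) (exp (F t) * F') t := by
    have h1 := (hasFDerivAt_exp (𝕂 := ℝ) (x := F t)).comp_hasDerivAt t hFd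
    simp at h1 ⊢; exact h1
  have hval : HasDerivAt (fun s => ((exp (F s) : S) : Matrix (Fin n) (Fin n) ℝ))
      ((exp (F t) * F' : S) : Matrix (Fin n) (Fin n) ℝ) t :=
    ((S.toSubmodule.subtypeL).hasFDerivAt).comp_hasDerivAt t hexp
  have hcoe : ∀ x : S,
      ((exp x : S) : Matrix (Fin n) (Fin n) ℝ) = exp (x : Matrix (Fin n) (Fin n) ℝ) := by
    intro x
    letI : NormedAlgebra ℚ S := NormedAlgebra.restrictScalars ℚ ℝ S
    exact map_exp (S.val : S →ₐ[ℝ] _) continuous_subtype_val x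
  have hcF : ∀ s, ((F s : S) : Matrix (Fin n) (Fin n) ℝ)
      = ∑ k : Fin N, c k s • L ^ (k : ℕ) := by
    intro s; simp [hF, he]
  convert hval using 2 with s
  · rw [hcoe, hcF]
  · have h2 : ((F' : S) : Matrix (Fin n) (Fin n) ℝ) = ∑ k : Fin N, c' k • L ^ (k : ℕ) := by
      simp [hF', he]
    rw [← h2, ← hcF, ← hcoe]
    exact congrArg Subtype.val (mul_comm F' (exp (F t)))


set_option maxHeartbeats 1000000 in
set_option synthInstance.maxHeartbeats 400000 in
theorem aux_exp_deriv' {n N : ℕ} (L : Matrix (Fin n) (Fin n) ℝ)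
    (c : Fin N → ℝ → ℝ) (c' : Fin N → ℝ) (t : ℝ)
    (hc : ∀ k, HasDerivAt (c k) (c' k) t) :
    HasDerivAt
      (fun s => exp (∑ k : Fin N, c k s • L ^ (k : ℕ)))
      ((∑ k : Fin N, c' k • L ^ (k : ℕ)) * exp (∑ k : Fin N, c k t • L ^ (k : ℕ))) t := by
  have h0 := aux_exp_deriv L c c' t hc
  have h1 := @hasDerivAt_transfer _ _ _ _ Matrix.normedAddCommGroup Matrix.normedSpace
    _ _ _ h0 (by exact Module.Finite.matrix)
    ⟨⟨fun x => x, fun _ _ => rfl⟩, fun _ _ => rfl⟩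
  exact h1

end AuxLinfty

/-- Product rule for a bilinear map on finite-dimensional spaces. -/
theorem hasDerivAt_bilin {E F G : Type*} [NormedAddCommGroup E] [NormedSpace ℝ E]
    [NormedAddCommGroup F] [NormedSpace ℝ F] [NormedAddCommGroup G] [NormedSpace ℝ G]
    [FiniteDimensional ℝ E] [FiniteDimensional ℝ F]
    (b : E →ₗ[ℝ] F →ₗ[ℝ] G) {f : ℝ → E} {g : ℝ → F} {f' : E} {g' : F} {t : ℝ}
    (hf : HasDerivAt f f' t) (hg : HasDerivAt g g' t) :
    HasDerivAt (fun s => b (f s) (g s)) (b f' (g t) + b (f t) g') t := by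
  let bL : E →ₗ[ℝ] (F →L[ℝ] G) :=
    { toFun := fun x => LinearMap.toContinuousLinearMap (b x)
      map_add' := fun x y => by ext v; simp
      map_smul' := fun c x => by ext v; simp }
  let bCLM : E →L[ℝ] (F →L[ℝ] G) := LinearMap.toContinuousLinearMap bL
  have hc : HasDerivAt (fun s => bCLM (f s)) (bCLM f') t :=
    (bCLM.hasFDerivAt).comp_hasDerivAt t hf
  have := hc.clm_apply hg
  simpa [bCLM, bL] using this

attribute [local instance] Matrix.normedAddCommGroup Matrix.normedSpace

set_option maxHeartbeats 4000000 in
set_option synthInstance.maxHeartbeats 400000 in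
/-- Derivative of the conditional covariance `K(t) = Ψ_t (∫_0^t g(τ)² • Ψ_τ⁻¹ Ψ_τ⁻¹ dτ) Ψ_tᵀ`
of the topological SDE `dY = H_t Y dt + g_t dW` with `H t = ∑_{k=0}^K h_k(t) • L^k` and
`Ψ_t = exp (∫_0^t H)`: for every `t`, `K` has derivative
`H_t K(t) + g(t)² • I + K(t) H_tᵀ` at `t`. -/
theorem conditional_covariance_hasDerivAt {n K : ℕ} (hn : 1 ≤ n) (hK : 1 ≤ K)
    (L : Matrix (Fin n) (Fin n) ℝ) (hL : L.IsSymm)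
    (h : Fin (K + 1) → ℝ → ℝ) (hh : ∀ k, Continuous (h k))
    (g : ℝ → ℝ) (hg : Continuous g) :
    let H : ℝ → Matrix (Fin n) (Fin n) ℝ := fun t => ∑ k : Fin (K + 1), h k t • L ^ (k : ℕ)
    let Ψ : ℝ → Matrix (Fin n) (Fin n) ℝ := fun t => exp (∫ τ in (0:ℝ)..t, H τ)
    let Kc : ℝ → Matrix (Fin n) (Fin n) ℝ := fun t =>
      Ψ t * (∫ τ in (0:ℝ)..t, g τ ^ 2 • ((Ψ τ)⁻¹ * (Ψ τ)⁻¹)) * (Ψ t)ᵀ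
    ∀ t : ℝ, HasDerivAt Kc
      (H t * Kc t + g t ^ 2 • (1 : Matrix (Fin n) (Fin n) ℝ) + Kc t * (H t)ᵀ) t := by
  intro H Ψ Kc t
  classical
  set a : Fin (K + 1) → ℝ → ℝ := fun k s => ∫ τ in (0:ℝ)..s, h k τ with ha
  have haD : ∀ k (s : ℝ), HasDerivAt (a k) (h k s) s := fun k s =>
    ((hh k).integral_hasStrictDerivAt 0 s).hasDerivAt
  have hInt : ∀ s : ℝ, (∫ τ in (0:ℝ)..s, H τ) = ∑ k : Fin (K + 1), a k s • L ^ (k : ℕ) := by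
    intro s
    have : (∫ τ in (0:ℝ)..s, H τ)
        = ∑ k : Fin (K + 1), ∫ τ in (0:ℝ)..s, h k τ • L ^ (k : ℕ) := by
      exact intervalIntegral.integral_finset_sum
        (fun k _ => ((hh k).smul continuous_const).intervalIntegrable _ _)
    rw [this]
    exact Finset.sum_congr rfl fun k _ => intervalIntegral.integral_smul_const _ _
  have hΨeq : ∀ s : ℝ, Ψ s = exp (∑ k : Fin (K + 1), a k s • L ^ (k : ℕ)) := fun s => by
    show exp (∫ τ in (0:ℝ)..s, H τ) = _
    rw [hInt]
  -- derivative of Ψ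
  have hfin : FiniteDimensional ℝ (Matrix (Fin n) (Fin n) ℝ) := by infer_instance
  have hΨd : ∀ s : ℝ, HasDerivAt Ψ (H s * Ψ s) s := by
    intro s
    have h1 := aux_exp_deriv' L a (fun k => h k s) s (fun k => haD k s)
    have h2 : (fun s => exp (∑ k : Fin (K + 1), a k s • L ^ (k : ℕ))) = Ψ := by
      funext u; rw [hΨeq u]
    rw [h2] at h1
    rw [hΨeq s]
    exact h1
  -- invertibility and symmetry of Ψ
  have hcomm : ∀ s : ℝ, Commute (∫ τ in (0:ℝ)..s, H τ) (-(∫ τ in (0:ℝ)..s, H τ)) :=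
    fun s => (Commute.refl _).neg_right
  have hinv1 : ∀ s : ℝ, Ψ s * (Ψ s)⁻¹ = 1 := by
    intro s
    have := Matrix.exp_add_of_commute _ _ (hcomm s)
    rw [add_neg_cancel, NormedSpace.exp_zero, Matrix.exp_neg] at this
    exact this.symm
  have hinv2 : ∀ s : ℝ, (Ψ s)⁻¹ * Ψ s = 1 := by
    intro s
    have := Matrix.exp_add_of_commute _ _ ((hcomm s).symm)
    rw [neg_add_cancel, NormedSpace.exp_zero, Matrix.exp_neg] at this
    exact this.symm
  have hsymm : ∀ s : ℝ, (Ψ s)ᵀ = Ψ s := by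
    intro s
    have hA : (∫ τ in (0:ℝ)..s, H τ)ᵀ = (∫ τ in (0:ℝ)..s, H τ) := by
      rw [hInt]
      rw [Matrix.transpose_sum]
      refine Finset.sum_congr rfl fun k _ => ?_
      rw [Matrix.transpose_smul, Matrix.transpose_pow, hL.eq]
    show (exp (∫ τ in (0:ℝ)..s, H τ))ᵀ = _
    rw [← Matrix.exp_transpose, hA]
  -- continuity of the inverse of Ψ
  set Φ : ℝ → Matrix (Fin n) (Fin n) ℝ :=
    fun s => exp (∑ k : Fin (K + 1), (-(a k s)) • L ^ (k : ℕ)) with hΦ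
  have hΦd : ∀ s : ℝ, ContinuousAt Φ s := by
    intro s
    have h1 := aux_exp_deriv' L (fun k u => -(a k u)) (fun k => -(h k s)) s
      (fun k => (haD k s).neg)
    exact h1.continuousAt
  have hΦeq : ∀ s : ℝ, (Ψ s)⁻¹ = Φ s := by
    intro s
    have : -(∫ τ in (0:ℝ)..s, H τ) = ∑ k : Fin (K + 1), (-(a k s)) • L ^ (k : ℕ) := by
      rw [hInt, ← Finset.sum_neg_distrib]
      exact Finset.sum_congr rfl fun k _ => (neg_smul _ _).symm
    rw [show Ψ s = exp (∫ τ in (0:ℝ)..s, H τ) from rfl, ← Matrix.exp_neg, this]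
  have hgc : Continuous fun τ => g τ ^ 2 • ((Ψ τ)⁻¹ * (Ψ τ)⁻¹) := by
    have : (fun τ => g τ ^ 2 • ((Ψ τ)⁻¹ * (Ψ τ)⁻¹))
        = fun τ => g τ ^ 2 • (Φ τ * Φ τ) := by
      funext τ; rw [hΦeq]
    rw [this]
    have hΦc : Continuous Φ := continuous_iff_continuousAt.2 hΦd
    exact (hg.pow 2).smul (hΦc.matrix_mul hΦc)
  -- FTC for the inner integral
  set Sf : ℝ → Matrix (Fin n) (Fin n) ℝ :=
    fun s => ∫ τ in (0:ℝ)..s, g τ ^ 2 • ((Ψ τ)⁻¹ * (Ψ τ)⁻¹) with hSf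
  have hSd : HasDerivAt Sf (g t ^ 2 • ((Ψ t)⁻¹ * (Ψ t)⁻¹)) t :=
    (hgc.integral_hasStrictDerivAt 0 t).hasDerivAt
  -- product rules
  haveI hfinI : FiniteDimensional ℝ (Matrix (Fin n) (Fin n) ℝ) := hfin
  set mulLM := LinearMap.mul ℝ (Matrix (Fin n) (Fin n) ℝ) with hmulLM
  have h1 : HasDerivAt (fun s => Ψ s * Sf s)
      (H t * Ψ t * Sf t + g t ^ 2 • (Ψ t * ((Ψ t)⁻¹ * (Ψ t)⁻¹))) t := by
    have := hasDerivAt_bilin mulLM (hΨd t) hSd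
    simp [hmulLM] at this; exact this
  let trLM : Matrix (Fin n) (Fin n) ℝ →ₗ[ℝ] Matrix (Fin n) (Fin n) ℝ :=
    { toFun := Matrix.transpose
      map_add' := Matrix.transpose_add
      map_smul' := fun c x => Matrix.transpose_smul c x }
  have hT : HasDerivAt (fun s => (Ψ s)ᵀ) ((H t * Ψ t)ᵀ) t := by
    have := hasDerivAt_transfer (hΨd t) hfin trLM
    simp [trLM] at this ⊢; exact this
  have h2 : HasDerivAt (fun s => Ψ s * Sf s * (Ψ s)ᵀ)
      (H t * Ψ t * Sf t * (Ψ t)ᵀ + g t ^ 2 • (Ψ t * ((Ψ t)⁻¹ * (Ψ t)⁻¹) * (Ψ t)ᵀ)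
        + Ψ t * Sf t * ((Ψ t)ᵀ * (H t)ᵀ)) t := by
    have := hasDerivAt_bilin mulLM h1 hT
    simp [hmulLM, Matrix.transpose_mul, add_mul, smul_mul_assoc, mul_assoc] at this ⊢; exact this
  -- identify the derivative
  have e1 : Ψ t * ((Ψ t)⁻¹ * (Ψ t)⁻¹) * (Ψ t)ᵀ = (1 : Matrix (Fin n) (Fin n) ℝ) := by
    rw [hsymm, ← mul_assoc (Ψ t), hinv1, one_mul, hinv2]
  have e2 : H t * Ψ t * Sf t * (Ψ t)ᵀ + g t ^ 2 • (Ψ t * ((Ψ t)⁻¹ * (Ψ t)⁻¹) * (Ψ t)ᵀ)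
        + Ψ t * Sf t * ((Ψ t)ᵀ * (H t)ᵀ)
      = H t * (Ψ t * Sf t * (Ψ t)ᵀ) + g t ^ 2 • (1 : Matrix (Fin n) (Fin n) ℝ)
        + (Ψ t * Sf t * (Ψ t)ᵀ) * (H t)ᵀ := by
    rw [e1]
    simp only [mul_assoc]
  show HasDerivAt (fun s => Ψ s * Sf s * (Ψ s)ᵀ)
      (H t * (Ψ t * Sf t * (Ψ t)ᵀ) + g t ^ 2 • (1 : Matrix (Fin n) (Fin n) ℝ)
        + (Ψ t * Sf t * (Ψ t)ᵀ) * (H t)ᵀ) t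
  rw [← e2]
  exact h2
end

section
/- Fix n, K ≥ 1, a symmetric n×n real matrix L, continuous functions h_0, …, h_K : ℝ → ℝ with H_t := ∑_{k=0}^K h_k(t) • L^k, and a continuous function g : ℝ → ℝ. Write Ψ_t := exp(∫_0^t H_τ dτ) and, for t₁ ≤ t₂, K(t₁,t₂) := Ψ_{t₁} * (∫_0^{t₁} g(τ)² • (Ψ_τ⁻¹ * Ψ_τ⁻¹) dτ) * Ψ_{t₂}ᵀ. Then: (i) for fixed t₂ and any t₁ < t₂, the function t₁ ↦ K(t₁,t₂) has derivative H_{t₁} * K(t₁,t₂) + g(t₁)² • (Ψ_{t₁}⁻¹ * Ψ_{t₂}ᵀ) at t₁; (ii) for fixed t₁ and any t₂ > t₁, the function t₂ ↦ K(t₁,t₂) has derivative K(t₁,t₂) * H_{t₂}ᵀ at t₂. -/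
open MeasureTheory Matrix NormedSpace

section Transfer
variable {n : ℕ}
set_option maxHeartbeats 1000000 in
private lemma matderiv_transfer {f : ℝ → Matrix (Fin n) (Fin n) ℝ}
    {f' : Matrix (Fin n) (Fin n) ℝ} {x : ℝ} :
    (letI := (Matrix.linftyOpNormedAddCommGroup : NormedAddCommGroup (Matrix (Fin n) (Fin n) ℝ));
      letI := (Matrix.linftyOpNormedSpace : NormedSpace ℝ (Matrix (Fin n) (Fin n) ℝ));
      HasDerivAt f f' x) ↔
    (letI := (Matrix.normedAddCommGroup : NormedAddCommGroup (Matrix (Fin n) (Fin n) ℝ));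
      letI := (Matrix.normedSpace : NormedSpace ℝ (Matrix (Fin n) (Fin n) ℝ));
      HasDerivAt f f' x) := by
  exact Iff.rfl
end Transfer

attribute [local instance] Matrix.normedAddCommGroup Matrix.normedSpace

section Helpers

variable {n : ℕ}

private lemma commute_matexp_left {x y : Matrix (Fin n) (Fin n) ℝ} (h : Commute x y) :
    Commute (exp x) y := by
  letI : NormedRing (Matrix (Fin n) (Fin n) ℝ) := Matrix.linftyOpNormedRing
  letI : NormedAlgebra ℝ (Matrix (Fin n) (Fin n) ℝ) := Matrix.linftyOpNormedAlgebra
  exact h.exp_left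

private lemma continuous_matexp :
    Continuous (exp : Matrix (Fin n) (Fin n) ℝ → Matrix (Fin n) (Fin n) ℝ) := by
  letI : NormedRing (Matrix (Fin n) (Fin n) ℝ) := Matrix.linftyOpNormedRing
  letI : NormedAlgebra ℝ (Matrix (Fin n) (Fin n) ℝ) := Matrix.linftyOpNormedAlgebra
  haveI : @CompleteSpace (Matrix (Fin n) (Fin n) ℝ)
      (Matrix.linftyOpNormedRing : NormedRing (Matrix (Fin n) (Fin n) ℝ)).toUniformSpace :=
    inferInstanceAs (CompleteSpace (Fin n → Fin n → ℝ))
  letI : NormedAddCommGroup (Matrix (Fin n) (Fin n) ℝ) := Matrix.linftyOpNormedAddCommGroup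
  exact continuous_iff_continuousAt.mpr fun x => (exp_analytic (𝕂 := ℝ) x).continuousAt

private lemma matexp_deriv_zero {f : ℝ → Matrix (Fin n) (Fin n) ℝ}
    {f' : Matrix (Fin n) (Fin n) ℝ} {t : ℝ} (hf : HasDerivAt f f' t) (h0 : f t = 0) :
    HasDerivAt (fun u => exp (f u)) f' t := by
  rw [← matderiv_transfer] at hf ⊢
  letI : NormedRing (Matrix (Fin n) (Fin n) ℝ) := Matrix.linftyOpNormedRing
  letI : NormedAlgebra ℝ (Matrix (Fin n) (Fin n) ℝ) := Matrix.linftyOpNormedAlgebra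
  letI : NormedAddCommGroup (Matrix (Fin n) (Fin n) ℝ) := Matrix.linftyOpNormedAddCommGroup
  letI : NormedSpace ℝ (Matrix (Fin n) (Fin n) ℝ) := Matrix.linftyOpNormedSpace
  haveI hcs : @CompleteSpace (Matrix (Fin n) (Fin n) ℝ)
      Matrix.linftyOpNormedAddCommGroup.toMetricSpace.toUniformSpace := by
    exact inferInstanceAs (CompleteSpace (Fin n → Fin n → ℝ))
  have he := @hasFDerivAt_exp_zero ℝ (Matrix (Fin n) (Fin n) ℝ) _
    Matrix.linftyOpNormedRing Matrix.linftyOpNormedAlgebra hcs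
  rw [← h0] at he
  have := he.comp_hasDerivAt t hf
  exact this

private lemma matderiv_mul_mul_const {f s : ℝ → Matrix (Fin n) (Fin n) ℝ}
    {f' s' : Matrix (Fin n) (Fin n) ℝ} {t : ℝ} (hf : HasDerivAt f f' t)
    (hs : HasDerivAt s s' t) (C : Matrix (Fin n) (Fin n) ℝ) :
    HasDerivAt (fun u => f u * s u * C) ((f' * s t + f t * s') * C) t := by
  rw [← matderiv_transfer] at hf hs ⊢
  letI : NormedRing (Matrix (Fin n) (Fin n) ℝ) := Matrix.linftyOpNormedRing
  letI : NormedAlgebra ℝ (Matrix (Fin n) (Fin n) ℝ) := Matrix.linftyOpNormedAlgebra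
  exact (hf.mul hs).mul_const C

private lemma matderiv_const_mul {f : ℝ → Matrix (Fin n) (Fin n) ℝ}
    {f' : Matrix (Fin n) (Fin n) ℝ} {t : ℝ} (hf : HasDerivAt f f' t)
    (C : Matrix (Fin n) (Fin n) ℝ) :
    HasDerivAt (fun u => C * f u) (C * f') t := by
  rw [← matderiv_transfer] at hf ⊢
  letI : NormedRing (Matrix (Fin n) (Fin n) ℝ) := Matrix.linftyOpNormedRing
  letI : NormedAlgebra ℝ (Matrix (Fin n) (Fin n) ℝ) := Matrix.linftyOpNormedAlgebra
  exact hf.const_mul C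

end Helpers

/-- Partial derivatives of the conditional cross covariance
`K(t₁,t₂) = Ψ_{t₁} (∫_0^{t₁} g(τ)² • Ψ_τ⁻¹ Ψ_τ⁻¹ dτ) Ψ_{t₂}ᵀ` (the case `t₁ ≤ t₂`) of the
topological SDE `dY = H_t Y dt + g_t dW`: (i) for fixed `t₂` and `t₁ < t₂`, in the first
variable the derivative is `H_{t₁} K(t₁,t₂) + g(t₁)² • (Ψ_{t₁}⁻¹ Ψ_{t₂}ᵀ)`; (ii) for fixed
`t₁` and `t₂ > t₁`, in the second variable the derivative is `K(t₁,t₂) H_{t₂}ᵀ`. -/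
theorem cross_covariance_partial_derivs_le {n K : ℕ} (hn : 1 ≤ n) (hK : 1 ≤ K)
    (L : Matrix (Fin n) (Fin n) ℝ) (hL : L.IsSymm)
    (h : Fin (K + 1) → ℝ → ℝ) (hh : ∀ k, Continuous (h k))
    (g : ℝ → ℝ) (hg : Continuous g) :
    let H : ℝ → Matrix (Fin n) (Fin n) ℝ := fun t => ∑ k : Fin (K + 1), h k t • L ^ (k : ℕ)
    let Ψ : ℝ → Matrix (Fin n) (Fin n) ℝ := fun t => exp (∫ τ in (0:ℝ)..t, H τ)
    let Kc : ℝ → ℝ → Matrix (Fin n) (Fin n) ℝ := fun t₁ t₂ =>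
      Ψ t₁ * (∫ τ in (0:ℝ)..t₁, g τ ^ 2 • ((Ψ τ)⁻¹ * (Ψ τ)⁻¹)) * (Ψ t₂)ᵀ
    (∀ t₁ t₂ : ℝ, t₁ < t₂ →
        HasDerivAt (fun u : ℝ => Kc u t₂)
          (H t₁ * Kc t₁ t₂ + g t₁ ^ 2 • ((Ψ t₁)⁻¹ * (Ψ t₂)ᵀ)) t₁) ∧
      (∀ t₁ t₂ : ℝ, t₁ < t₂ →
        HasDerivAt (fun u : ℝ => Kc t₁ u) (Kc t₁ t₂ * (H t₂)ᵀ) t₂) := by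
  intro H Ψ Kc
  -- the scalar primitives and the matrix primitive B
  set c : Fin (K + 1) → ℝ → ℝ := fun k t => ∫ τ in (0:ℝ)..t, h k τ with hc
  set B : ℝ → Matrix (Fin n) (Fin n) ℝ :=
    fun t => ∑ k : Fin (K + 1), c k t • L ^ (k : ℕ) with hB
  -- commutation of everything in sight
  have hcomm : ∀ (a b : Fin (K + 1) → ℝ),
      Commute (∑ k : Fin (K + 1), a k • L ^ (k : ℕ)) (∑ k : Fin (K + 1), b k • L ^ (k : ℕ)) := by
    intro a b
    refine Commute.sum_left _ _ _ fun i _ => Commute.sum_right _ _ _ fun j _ => ?_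
    exact (((Commute.refl L).pow_pow (i : ℕ) (j : ℕ)).smul_right (b j)).smul_left (a i)
  -- the integral of H is B
  have hAB : ∀ t : ℝ, (∫ τ in (0:ℝ)..t, H τ) = B t := by
    intro t
    rw [hB]
    show (∫ τ in (0:ℝ)..t, ∑ k : Fin (K + 1), h k τ • L ^ (k : ℕ)) = _
    rw [intervalIntegral.integral_finset_sum (f := fun k τ => h k τ • L ^ (k : ℕ)) (fun k _ => ((hh k).smul continuous_const).intervalIntegrable _ _)]
    exact Finset.sum_congr rfl fun k _ => intervalIntegral.integral_smul_const _ _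
  have hΨB : ∀ t : ℝ, Ψ t = exp (B t) := fun t => by rw [show Ψ t = exp (∫ τ in (0:ℝ)..t, H τ) from rfl, hAB]
  -- derivative of B
  have hBd : ∀ t : ℝ, HasDerivAt B (H t) t := by
    intro t
    refine HasDerivAt.fun_sum fun k _ => ?_
    exact (((hh k).integral_hasStrictDerivAt 0 t).hasDerivAt).smul_const _
  -- B has the commutation shape
  have hBcommB : ∀ s t : ℝ, Commute (B s) (B t) := fun s t => hcomm _ _
  have hBcommH : ∀ s t : ℝ, Commute (B s) (H t) := fun s t => hcomm _ _
  -- derivative of Ψ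
  have hΨd : ∀ t : ℝ, HasDerivAt Ψ (H t * Ψ t) t := by
    intro t
    have hkey : Ψ = fun u => exp (B t) * exp (B u - B t) := by
      funext u
      rw [hΨB u, ← Matrix.exp_add_of_commute _ _ ((hBcommB t u).sub_right (Commute.refl (B t))),
        add_sub_cancel]
    have hd : HasDerivAt (fun u => B u - B t) (H t) t := (hBd t).sub_const _
    have h0 : B t - B t = 0 := sub_self _
    have h2 : HasDerivAt Ψ (exp (B t) * H t) t := by
      rw [hkey]
      exact matderiv_const_mul (matexp_deriv_zero hd h0) _
    have h3 : H t * Ψ t = exp (B t) * H t := by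
      rw [hΨB t]
      exact ((commute_matexp_left (hBcommH t t)).eq).symm
    rw [h3]
    exact h2
  have hΨcont : Continuous Ψ := by
    refine continuous_iff_continuousAt.mpr fun t => ((hΨd t).continuousAt)
  -- inverse of Ψ
  have hΨinv : ∀ t : ℝ, (Ψ t)⁻¹ = exp (-(B t)) := by
    intro t
    rw [hΨB, ← Matrix.exp_neg]
  have hΨunit : ∀ t : ℝ, Ψ t * (Ψ t)⁻¹ = 1 := by
    intro t
    refine Matrix.mul_nonsing_inv _ ?_
    rw [hΨB]
    exact (Matrix.isUnit_iff_isUnit_det _).mp (Matrix.isUnit_exp _)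
  have hinvcont : Continuous fun τ => (Ψ τ)⁻¹ := by
    have : (fun τ => (Ψ τ)⁻¹) = fun τ => exp (-(B τ)) := funext fun τ => hΨinv τ
    rw [this]
    have hBcont : Continuous B :=
      continuous_iff_continuousAt.mpr fun t => (hBd t).continuousAt
    exact continuous_matexp.comp hBcont.neg
  -- the inner integral S and its derivative
  set S : ℝ → Matrix (Fin n) (Fin n) ℝ :=
    fun t => ∫ τ in (0:ℝ)..t, g τ ^ 2 • ((Ψ τ)⁻¹ * (Ψ τ)⁻¹) with hS
  have hScont : Continuous fun τ => g τ ^ 2 • ((Ψ τ)⁻¹ * (Ψ τ)⁻¹) :=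
    ((hg.pow 2).smul (hinvcont.matrix_mul hinvcont))
  have hSd : ∀ t : ℝ, HasDerivAt S (g t ^ 2 • ((Ψ t)⁻¹ * (Ψ t)⁻¹)) t := fun t =>
    (hScont.integral_hasStrictDerivAt 0 t).hasDerivAt
  -- symmetry: transposes disappear
  have hLpow : ∀ k : ℕ, (L ^ k)ᵀ = L ^ k := by
    intro k
    rw [Matrix.transpose_pow, hL]
  have hHsymm : ∀ t : ℝ, (H t)ᵀ = H t := by
    intro t
    show (∑ k : Fin (K + 1), h k t • L ^ (k : ℕ))ᵀ = _
    rw [Matrix.transpose_sum]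
    exact Finset.sum_congr rfl fun k _ => by rw [Matrix.transpose_smul, hLpow]
  have hBsymm : ∀ t : ℝ, (B t)ᵀ = B t := by
    intro t
    rw [hB, Matrix.transpose_sum]
    exact Finset.sum_congr rfl fun k _ => by rw [Matrix.transpose_smul, hLpow]
  have hΨsymm : ∀ t : ℝ, (Ψ t)ᵀ = Ψ t := by
    intro t
    rw [hΨB, ← Matrix.exp_transpose, hBsymm]
  constructor
  · -- part (i)
    intro t₁ t₂ _
    have hd := matderiv_mul_mul_const (hΨd t₁) (hSd t₁) ((Ψ t₂)ᵀ)
    convert hd using 1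
    have hfactor : Ψ t₁ * (g t₁ ^ 2 • ((Ψ t₁)⁻¹ * (Ψ t₁)⁻¹)) * (Ψ t₂)ᵀ
        = g t₁ ^ 2 • ((Ψ t₁)⁻¹ * (Ψ t₂)ᵀ) := by
      rw [mul_smul_comm, smul_mul_assoc]
      congr 1
      rw [← mul_assoc, hΨunit t₁, one_mul]
    rw [add_mul, hfactor]
    congr 1
    show H t₁ * (Ψ t₁ * S t₁ * (Ψ t₂)ᵀ) = _
    simp only [mul_assoc]
  · -- part (ii)
    intro t₁ t₂ _
    have hfun : (fun u : ℝ => Kc t₁ u) = fun u => (Ψ t₁ * S t₁) * Ψ u := by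
      funext u
      show Ψ t₁ * S t₁ * (Ψ u)ᵀ = _
      rw [hΨsymm u]
    rw [hfun]
    have hd := matderiv_const_mul (hΨd t₂) (Ψ t₁ * S t₁)
    convert hd using 1
    have hcom : Ψ t₂ * H t₂ = H t₂ * Ψ t₂ := by
      rw [hΨB t₂]
      exact (commute_matexp_left (hBcommH t₂ t₂)).eq
    show Ψ t₁ * S t₁ * (Ψ t₂)ᵀ * (H t₂)ᵀ = _
    rw [hΨsymm t₂, hHsymm t₂, mul_assoc, hcom]
end

section
/- Fix n, K ≥ 1, a symmetric n×n real matrix L, continuous functions h_0, …, h_K : ℝ → ℝ with H_t := ∑_{k=0}^K h_k(t) • L^k, and a continuous function g : ℝ → ℝ. Write Ψ_t := exp(∫_0^t H_τ dτ) and, for t₁ ≥ t₂, K(t₁,t₂) := Ψ_{t₁} * (∫_0^{t₂} g(τ)² • (Ψ_τ⁻¹ * Ψ_τ⁻¹) dτ) * Ψ_{t₂}ᵀ. Then: (i) for fixed t₂ and any t₁ > t₂, the function t₁ ↦ K(t₁,t₂) has derivative H_{t₁} * K(t₁,t₂) at t₁; (ii) for fixed t₁ and any t₂ < t₁, the function t₂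 ↦ K(t₁,t₂) has derivative g(t₂)² • (Ψ_{t₁} * Ψ_{t₂}⁻¹) + K(t₁,t₂) * H_{t₂}ᵀ at t₂. -/
open MeasureTheory Matrix NormedSpace

section Linfty
attribute [local instance] Matrix.linftyOpNormedAddCommGroup Matrix.linftyOpNormedRing
  Matrix.linftyOpNormedAlgebra

variable {n : ℕ}

private noncomputable def entryCLM (i j : Fin n) :
    Matrix (Fin n) (Fin n) ℝ →L[ℝ] ℝ :=
  LinearMap.toContinuousLinearMap
    { toFun := fun A => A i j
      map_add' := fun _ _ => rfl
      map_smul' := fun _ _ => rfl }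

private theorem entry_hasDerivAt {f : ℝ → Matrix (Fin n) (Fin n) ℝ}
    {f' : Matrix (Fin n) (Fin n) ℝ} {x : ℝ} (hf : HasDerivAt f f' x) (i j : Fin n) :
    HasDerivAt (fun t => f t i j) (f' i j) x :=
  (entryCLM i j).hasFDerivAt.comp_hasDerivAt x hf

private theorem hasDerivAt_of_entries {f : ℝ → Matrix (Fin n) (Fin n) ℝ}
    {f' : Matrix (Fin n) (Fin n) ℝ} {x : ℝ}
    (hf : ∀ i j, HasDerivAt (fun t => f t i j) (f' i j) x) :
    HasDerivAt f f' x := by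
  have hfe : ∀ t, f t = ∑ i : Fin n, ∑ j : Fin n, f t i j • Matrix.single i j (1 : ℝ) := by
    intro t
    simpa [smul_single] using matrix_eq_sum_single (f t)
  have hf'e : f' = ∑ i : Fin n, ∑ j : Fin n, f' i j • Matrix.single i j (1 : ℝ) := by
    simpa [smul_single] using matrix_eq_sum_single f'
  rw [funext hfe, hf'e]
  exact HasDerivAt.fun_sum fun i _ => HasDerivAt.fun_sum fun j _ => (hf i j).smul_const (Matrix.single i j (1 : ℝ))

theorem exp_deriv_entries {f : ℝ → Matrix (Fin n) (Fin n) ℝ}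
    {f' : Matrix (Fin n) (Fin n) ℝ} {t₀ : ℝ}
    (hf : ∀ i j, HasDerivAt (fun t => f t i j) (f' i j) t₀)
    (hc : ∀ t, Commute (f t) (f t₀)) (i j : Fin n) :
    HasDerivAt (fun t => NormedSpace.exp (f t) i j) ((f' * NormedSpace.exp (f t₀)) i j) t₀ := by
  have hfd : HasDerivAt f f' t₀ := hasDerivAt_of_entries hf
  have he : ∀ t, NormedSpace.exp (f t) = NormedSpace.exp (f t - f t₀) * NormedSpace.exp (f t₀) := by
    intro t
    rw [← Matrix.exp_add_of_commute _ _ ((hc t).sub_left (Commute.refl _)), sub_add_cancel]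
  have h1 : HasDerivAt (fun t => f t - f t₀) f' t₀ := hfd.sub_const _
  have h2 : HasFDerivAt (NormedSpace.exp) (1 : Matrix (Fin n) (Fin n) ℝ →L[ℝ] Matrix (Fin n) (Fin n) ℝ)
      ((fun t => f t - f t₀) t₀) := by
    show HasFDerivAt _ _ (f t₀ - f t₀); rw [sub_self]; exact hasFDerivAt_exp_zero_of_radius_pos
      (((expSeries_radius_eq_top ℝ (Matrix (Fin n) (Fin n) ℝ)).symm ▸ ENNReal.zero_lt_top))
  have h3 : HasDerivAt (fun t => NormedSpace.exp (f t - f t₀)) f' t₀ := by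
    have h3' := h2.comp_hasDerivAt t₀ h1; exact h3'
  have h4 : HasDerivAt (fun t => NormedSpace.exp (f t - f t₀) * NormedSpace.exp (f t₀)) (f' * NormedSpace.exp (f t₀)) t₀ :=
    h3.mul_const _
  exact entry_hasDerivAt (by simpa only [← he] using h4) i j

theorem mul_deriv_entries {a b : ℝ → Matrix (Fin n) (Fin n) ℝ}
    {a' b' : Matrix (Fin n) (Fin n) ℝ} {t₀ : ℝ}
    (ha : ∀ i j, HasDerivAt (fun t => a t i j) (a' i j) t₀)
    (hb : ∀ i j, HasDerivAt (fun t => b t i j) (b' i j) t₀) (i j : Fin n) :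
    HasDerivAt (fun t => (a t * b t) i j) ((a' * b t₀ + a t₀ * b') i j) t₀ :=
  entry_hasDerivAt ((hasDerivAt_of_entries ha).mul (hasDerivAt_of_entries hb)) i j

theorem matexp_continuous : Continuous fun A : Matrix (Fin n) (Fin n) ℝ => NormedSpace.exp A :=
  exp_continuous

end Linfty

attribute [local instance] Matrix.normedAddCommGroup Matrix.normedSpace


section Main
attribute [local instance] Matrix.normedAddCommGroup Matrix.normedSpace

variable {n : ℕ}

private theorem matDeriv_iff {f : ℝ → Matrix (Fin n) (Fin n) ℝ}
    {f' : Matrix (Fin n) (Fin n) ℝ} {x : ℝ} :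
    HasDerivAt f f' x ↔ ∀ i j, HasDerivAt (fun t => f t i j) (f' i j) x := by
  constructor
  · intro h i j
    exact (hasDerivAt_pi.1 (hasDerivAt_pi.1 h i)) j
  · intro h
    exact hasDerivAt_pi.2 fun i => hasDerivAt_pi.2 (h i)

private theorem hasDerivAt_matexp {f : ℝ → Matrix (Fin n) (Fin n) ℝ}
    {f' : Matrix (Fin n) (Fin n) ℝ} {t₀ : ℝ} (hf : HasDerivAt f f' t₀)
    (hc : ∀ t, Commute (f t) (f t₀)) :
    HasDerivAt (fun t => NormedSpace.exp (f t)) (f' * NormedSpace.exp (f t₀)) t₀ :=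
  matDeriv_iff.2 (exp_deriv_entries (matDeriv_iff.1 hf) hc)

private theorem HasDerivAt.matmul {a b : ℝ → Matrix (Fin n) (Fin n) ℝ}
    {a' b' : Matrix (Fin n) (Fin n) ℝ} {t₀ : ℝ}
    (ha : HasDerivAt a a' t₀) (hb : HasDerivAt b b' t₀) :
    HasDerivAt (fun t => a t * b t) (a' * b t₀ + a t₀ * b') t₀ :=
  matDeriv_iff.2 (mul_deriv_entries (matDeriv_iff.1 ha) (matDeriv_iff.1 hb))

/-- Partial derivatives of the conditional cross covariance
`K(t₁,t₂) = Ψ_{t₁} (∫_0^{t₂} g(τ)² • Ψ_τ⁻¹ Ψ_τ⁻¹ dτ) Ψ_{t₂}ᵀ` (the case `t₁ ≥ t₂`) of the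
topological SDE `dY = H_t Y dt + g_t dW`: (i) for fixed `t₂` and `t₁ > t₂`, in the first
variable the derivative is `H_{t₁} K(t₁,t₂)`; (ii) for fixed `t₁` and `t₂ < t₁`, in the second
variable the derivative is `g(t₂)² • (Ψ_{t₁} Ψ_{t₂}⁻¹) + K(t₁,t₂) H_{t₂}ᵀ`. -/
theorem cross_covariance_partial_derivs_ge {n K : ℕ} (hn : 1 ≤ n) (hK : 1 ≤ K)
    (L : Matrix (Fin n) (Fin n) ℝ) (hL : L.IsSymm)
    (h : Fin (K + 1) → ℝ → ℝ) (hh : ∀ k, Continuous (h k))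
    (g : ℝ → ℝ) (hg : Continuous g) :
    let H : ℝ → Matrix (Fin n) (Fin n) ℝ := fun t => ∑ k : Fin (K + 1), h k t • L ^ (k : ℕ)
    let Ψ : ℝ → Matrix (Fin n) (Fin n) ℝ := fun t => NormedSpace.exp (∫ τ in (0:ℝ)..t, H τ)
    let Kc : ℝ → ℝ → Matrix (Fin n) (Fin n) ℝ := fun t₁ t₂ =>
      Ψ t₁ * (∫ τ in (0:ℝ)..t₂, g τ ^ 2 • ((Ψ τ)⁻¹ * (Ψ τ)⁻¹)) * (Ψ t₂)ᵀ
    (∀ t₁ t₂ : ℝ, t₂ < t₁ →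
        HasDerivAt (fun u : ℝ => Kc u t₂) (H t₁ * Kc t₁ t₂) t₁) ∧
      (∀ t₁ t₂ : ℝ, t₂ < t₁ →
        HasDerivAt (fun u : ℝ => Kc t₁ u)
          (g t₂ ^ 2 • (Ψ t₁ * (Ψ t₂)⁻¹) + Kc t₁ t₂ * (H t₂)ᵀ) t₂) := by
  intro H Ψ Kc
  -- basic continuity
  have hHcont : Continuous H := by
    apply continuous_finset_sum
    exact fun k _ => (hh k).smul continuous_const
  set S : ℝ → Matrix (Fin n) (Fin n) ℝ := fun t => ∫ τ in (0:ℝ)..t, H τ with hSdef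
  have hΨS : ∀ t, Ψ t = NormedSpace.exp (S t) := fun t => rfl
  have hS : ∀ t, HasDerivAt S (H t) t := fun t =>
    intervalIntegral.integral_hasDerivAt_right (hHcont.intervalIntegrable _ _)
      (haveI : TopologicalSpace.PseudoMetrizableSpace (Matrix (Fin n) (Fin n) ℝ) := inferInstanceAs (TopologicalSpace.PseudoMetrizableSpace (Fin n → Fin n → ℝ)); hHcont.stronglyMeasurableAtFilter _ _) hHcont.continuousAt
  have hSpoly : ∀ t, S t = ∑ k : Fin (K + 1), (∫ τ in (0:ℝ)..t, h k τ) • L ^ (k : ℕ) := by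
    intro t
    show (∫ τ in (0:ℝ)..t, ∑ k : Fin (K + 1), h k τ • L ^ (k : ℕ)) = _
    rw [intervalIntegral.integral_finset_sum (f := fun k τ => h k τ • L ^ (k : ℕ))
      (fun k _ => ((hh k).smul (continuous_const : Continuous fun _ => L ^ (k : ℕ))).intervalIntegrable _ _)]
    exact Finset.sum_congr rfl fun k _ => intervalIntegral.integral_smul_const _ _
  have hcomm : ∀ c d : Fin (K + 1) → ℝ,
      Commute (∑ k : Fin (K + 1), c k • L ^ (k : ℕ)) (∑ k : Fin (K + 1), d k • L ^ (k : ℕ)) := by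
    intro c d
    refine Commute.sum_left _ _ _ fun k _ => (Commute.sum_right _ _ _ fun l _ => ?_)
    exact ((Commute.pow_pow_self L k l).smul_left (c k)).smul_right (d l)
  have hScS : ∀ s t, Commute (S s) (S t) := by
    intro s t; rw [hSpoly s, hSpoly t]; exact hcomm _ _
  have hHS : ∀ s t, Commute (H s) (S t) := by
    intro s t; rw [hSpoly t]; exact hcomm _ _
  have hΨd : ∀ t, HasDerivAt Ψ (H t * Ψ t) t := fun t =>
    hasDerivAt_matexp (hS t) fun s => hScS s t
  have hHsymm : ∀ t, (H t)ᵀ = H t := by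
    intro t
    simp only [H, Matrix.transpose_sum, Matrix.transpose_smul, Matrix.transpose_pow, hL.eq]
  have hΨsymm : ∀ t, (Ψ t)ᵀ = Ψ t := by
    intro t
    rw [hΨS t, ← Matrix.exp_transpose]
    congr 1
    rw [hSpoly t]
    simp only [Matrix.transpose_sum, Matrix.transpose_smul, Matrix.transpose_pow, hL.eq]
  have hinv : ∀ t, (Ψ t)⁻¹ = NormedSpace.exp (-(S t)) := fun t => (Matrix.exp_neg (S t)).symm ▸ rfl
  have hinvΨ : ∀ t, (Ψ t)⁻¹ * Ψ t = 1 := by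
    intro t
    rw [hinv t, hΨS t, ← Matrix.exp_add_of_commute _ _ ((Commute.refl (S t)).neg_left),
      neg_add_cancel, exp_zero]
  have hΨH : ∀ t, Ψ t * H t = H t * Ψ t := by
    intro t
    exact ((hHS t t).exp_right).symm.eq
  -- continuity of the inner integrand
  have hScont : Continuous S := by
    rw [continuous_iff_continuousAt]; exact fun t => (hS t).continuousAt
  have hexp_cont : Continuous fun A : Matrix (Fin n) (Fin n) ℝ => NormedSpace.exp A :=
    matexp_continuous
  have hIntegrand : Continuous fun τ => g τ ^ 2 • ((Ψ τ)⁻¹ * (Ψ τ)⁻¹) := by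
    have h1 : Continuous fun τ => (Ψ τ)⁻¹ := by
      simp only [hinv]
      exact hexp_cont.comp hScont.neg
    exact ((hg.pow 2)).smul (h1.matrix_mul h1)
  set F : ℝ → Matrix (Fin n) (Fin n) ℝ := fun u => ∫ τ in (0:ℝ)..u, g τ ^ 2 • ((Ψ τ)⁻¹ * (Ψ τ)⁻¹)
    with hFdef
  have hF : ∀ t, HasDerivAt F (g t ^ 2 • ((Ψ t)⁻¹ * (Ψ t)⁻¹)) t := fun t =>
    intervalIntegral.integral_hasDerivAt_right (hIntegrand.intervalIntegrable _ _)
      (haveI : TopologicalSpace.PseudoMetrizableSpace (Matrix (Fin n) (Fin n) ℝ) := inferInstanceAs (TopologicalSpace.PseudoMetrizableSpace (Fin n → Fin n → ℝ)); hIntegrand.stronglyMeasurableAtFilter _ _) hIntegrand.continuousAt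
  constructor
  · intro t₁ t₂ _
    have h1 := (hΨd t₁).matmul (hasDerivAt_const t₁ (F t₂ * (Ψ t₂)ᵀ))
    have h2 : HasDerivAt (fun u => Ψ u * (F t₂ * (Ψ t₂)ᵀ))
        (H t₁ * Ψ t₁ * (F t₂ * (Ψ t₂)ᵀ)) t₁ := by simpa using h1
    show HasDerivAt (fun u => Ψ u * F t₂ * (Ψ t₂)ᵀ) (H t₁ * (Ψ t₁ * F t₂ * (Ψ t₂)ᵀ)) t₁
    simp only [mul_assoc] at h2 ⊢
    exact h2
  · intro t₁ t₂ _
    have h1 := ((hasDerivAt_const t₂ (Ψ t₁)).matmul (hF t₂)).matmul (hΨd t₂)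
    show HasDerivAt (fun u => Ψ t₁ * F u * (Ψ u)ᵀ)
      (g t₂ ^ 2 • (Ψ t₁ * (Ψ t₂)⁻¹) + Ψ t₁ * F t₂ * (Ψ t₂)ᵀ * (H t₂)ᵀ) t₂
    simp only [hΨsymm, hHsymm]
    convert h1 using 1
    rw [zero_mul, zero_add]
    congr 1
    · rw [mul_smul_comm, smul_mul_assoc]
      congr 1
      rw [mul_assoc, mul_assoc, hinvΨ t₂, mul_one]
    · rw [mul_assoc, hΨH t₂]

end Main
end

section
/- Let L be a symmetric positive semidefinite n×n real matrix. Then for every y ∈ ℝ^n, the vector exp(−t • L) · y converges, as t → ∞, to the orthogonal projection of y onto the kernel of L (the kernel of the linear map x ↦ L·x on Euclidean space ℝ^n with its standard inner product). -/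
open Matrix NormedSpace Filter

set_option maxHeartbeats 2000000 in
/-- Harmonic steady state of the topological heat diffusion: for a symmetric positive
semidefinite real matrix `L`, `exp (-t • L) · y` converges as `t → ∞` to the orthogonal
projection of `y` onto the kernel of the linear map `x ↦ L · x` on Euclidean space. -/
theorem matrix_exp_neg_smul_tendsto_orthogonalProjection_ker {n : ℕ}
    (L : Matrix (Fin n) (Fin n) ℝ) (hL : L.IsSymm) (hLpsd : L.PosSemidef)
    (y : EuclideanSpace ℝ (Fin n)) :
    Tendsto (fun t : ℝ => Matrix.toEuclideanLin (NormedSpace.exp ((-t) • L)) y) atTop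
      (nhds ((Submodule.orthogonalProjectionOnto (LinearMap.ker (Matrix.toEuclideanLin L)) y :
        EuclideanSpace ℝ (Fin n)))) := by
  classical
  have hA : L.IsHermitian := hLpsd.1
  set U : Matrix (Fin n) (Fin n) ℝ := (hA.eigenvectorUnitary : Matrix (Fin n) (Fin n) ℝ) with hUdef
  set μ : Fin n → ℝ := hA.eigenvalues with hμdef
  have hU1 : U * star U = 1 := (Matrix.mem_unitaryGroup_iff).mp hA.eigenvectorUnitary.2
  have hU2 : star U * U = 1 := (Matrix.mem_unitaryGroup_iff').mp hA.eigenvectorUnitary.2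
  have hUinv : U⁻¹ = star U := Matrix.inv_eq_right_inv hU1
  have hUunit : IsUnit U := ⟨⟨U, star U, hU1, hU2⟩, rfl⟩
  have hspec : L = U * Matrix.diagonal μ * U⁻¹ := by
    rw [hUinv]
    have := hA.spectral_theorem
    simpa using this
  -- the diagonal entries in the limit
  set d0 : Fin n → ℝ := fun i => if μ i = 0 then 1 else 0 with hd0
  set P : Matrix (Fin n) (Fin n) ℝ := U * Matrix.diagonal d0 * U⁻¹ with hP
  have hexp : ∀ t : ℝ, NormedSpace.exp ((-t) • L)
      = U * Matrix.diagonal (fun i => Real.exp ((-t) * μ i)) * U⁻¹ := by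
    intro t
    have h1 : (-t) • L = U * Matrix.diagonal (fun i => (-t) * μ i) * U⁻¹ := by
      have hd : Matrix.diagonal (fun i => (-t) * μ i) = (-t) • Matrix.diagonal μ := by
        rw [← Matrix.diagonal_smul]; rfl
      rw [hspec, hd, Matrix.mul_smul, Matrix.smul_mul]
    rw [h1, Matrix.exp_conj U _ hUunit, Matrix.exp_diagonal, Pi.exp_def]
    rw [← Real.exp_eq_exp_ℝ]
  -- the evaluation map, linear in the diagonal entries
  set Φ : (Fin n → ℝ) →ₗ[ℝ] EuclideanSpace ℝ (Fin n) :=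
    { toFun := fun d => Matrix.toEuclideanLin (U * Matrix.diagonal d * U⁻¹) y
      map_add' := by
        intro a b
        show Matrix.toEuclideanLin (U * Matrix.diagonal (a + b) * U⁻¹) y = _
        rw [Pi.add_def, ← Matrix.diagonal_add, Matrix.mul_add, Matrix.add_mul, map_add, LinearMap.add_apply]
      map_smul' := by
        intro c a
        show Matrix.toEuclideanLin (U * Matrix.diagonal (c • a) * U⁻¹) y = _
        rw [RingHom.id_apply, Matrix.diagonal_smul, Matrix.mul_smul, Matrix.smul_mul, _root_.map_smul, LinearMap.smul_apply] } with hΦ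
  have hΦc : Continuous Φ := Φ.continuous_of_finiteDimensional
  have hdlim : Tendsto (fun t : ℝ => fun i => Real.exp ((-t) * μ i)) atTop (nhds d0) := by
    rw [tendsto_pi_nhds]
    intro i
    by_cases h : μ i = 0
    · have : (fun t : ℝ => Real.exp ((-t) * μ i)) = fun _ => (1 : ℝ) := by
        funext t; simp [h]
      rw [this]
      simp only [hd0, h, if_pos]
      exact tendsto_const_nhds
    · have hpos : 0 < μ i := lt_of_le_of_ne (hLpsd.eigenvalues_nonneg i) (Ne.symm h)
      have h1 : Tendsto (fun t : ℝ => t * μ i) atTop atTop :=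
        Tendsto.atTop_mul_const hpos tendsto_id
      have h2 : Tendsto (fun t : ℝ => (-t) * μ i) atTop atBot := by
        simp only [neg_mul]
        exact tendsto_neg_atBot_iff.mpr h1
      have h3 := Real.tendsto_exp_atBot.comp h2
      simp only [hd0, h, if_neg, Function.comp] at h3 ⊢
      exact h3
  have hmain : Tendsto (fun t : ℝ => Matrix.toEuclideanLin (NormedSpace.exp ((-t) • L)) y) atTop
      (nhds (Matrix.toEuclideanLin P y)) := by
    have h4 := (hΦc.tendsto d0).comp hdlim
    refine Tendsto.congr ?_ h4
    intro t
    simp only [Function.comp, hΦ, LinearMap.coe_mk, AddHom.coe_mk]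
    rw [hexp t]
  -- identify the limit with the orthogonal projection
  have hμd0 : ∀ i, μ i * d0 i = 0 := by
    intro i; by_cases h : μ i = 0 <;> simp [hd0, h]
  have hDD : Matrix.diagonal μ * Matrix.diagonal d0 = 0 := by
    rw [Matrix.diagonal_mul_diagonal]
    have : (fun i => μ i * d0 i) = (fun _ => (0:ℝ)) := funext hμd0
    rw [this]
    exact Matrix.diagonal_zero
  have hconj : ∀ D E : Matrix (Fin n) (Fin n) ℝ,
      (U * D * star U) * (U * E * star U) = U * (D * E) * star U := by
    intro D E
    have : (U * D * star U) * (U * E * star U) = U * D * (star U * U) * E * star U := by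
      noncomm_ring
    rw [this, hU2, mul_one]
    noncomm_ring
  have hLP : L * P = 0 := by
    rw [hspec, hP, hUinv, hconj, hDD, mul_zero, zero_mul]
  -- symmetry of P
  have hstarU : star U = U.transpose := by
    rw [Matrix.star_eq_conjTranspose, Matrix.conjTranspose_eq_transpose_of_trivial]
  have hPT : P.transpose = P := by
    rw [hP, hUinv, hstarU, Matrix.transpose_mul, Matrix.transpose_mul,
      Matrix.transpose_transpose, Matrix.diagonal_transpose, Matrix.mul_assoc]
  -- P fixes the kernel
  have hPfix : ∀ w : Fin n → ℝ, L *ᵥ w = 0 → P *ᵥ w = w := by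
    intro w hw
    have h5 : Matrix.diagonal μ *ᵥ (star U *ᵥ w) = 0 := by
      have h6 : star U *ᵥ (L *ᵥ w) = 0 := by rw [hw, Matrix.mulVec_zero]
      rw [hspec, hUinv] at h6
      rw [Matrix.mulVec_mulVec] at h6
      rw [Matrix.mulVec_mulVec]
      have : star U * (U * Matrix.diagonal μ * star U)
          = Matrix.diagonal μ * star U := by
        have h7 : star U * (U * Matrix.diagonal μ * star U)
            = (star U * U) * Matrix.diagonal μ * star U := by noncomm_ring
        rw [h7, hU2, one_mul]
      rwa [this] at h6
    have hc : ∀ i, μ i * (star U *ᵥ w) i = 0 := by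
      intro i
      have := congrFun h5 i
      rwa [Matrix.mulVec_diagonal] at this
    have hDc : Matrix.diagonal d0 *ᵥ (star U *ᵥ w) = star U *ᵥ w := by
      funext i
      rw [Matrix.mulVec_diagonal]
      by_cases h : μ i = 0
      · simp [hd0, h]
      · have : (star U *ᵥ w) i = 0 := by
          rcases mul_eq_zero.mp (hc i) with h' | h'
          · exact absurd h' h
          · exact h'
        simp [hd0, h, this]
    have : P *ᵥ w = U *ᵥ (Matrix.diagonal d0 *ᵥ (star U *ᵥ w)) := by
      rw [hP, hUinv, Matrix.mulVec_mulVec, Matrix.mulVec_mulVec]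
    rw [this, hDc, Matrix.mulVec_mulVec, hU1, Matrix.one_mulVec]
  have hproj : (Submodule.orthogonalProjectionOnto (LinearMap.ker (Matrix.toEuclideanLin L)) y :
      EuclideanSpace ℝ (Fin n)) = Matrix.toEuclideanLin P y := by
    apply Submodule.eq_starProjection_of_mem_of_inner_eq_zero
    · rw [LinearMap.mem_ker]
      have h9 : Matrix.toEuclideanLin L (Matrix.toEuclideanLin P y)
          = Matrix.toEuclideanLin (L * P) y := by
        simp [Matrix.toEuclideanLin_apply, Matrix.mulVec_mulVec]
      rw [h9, hLP, map_zero, LinearMap.zero_apply]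
    · intro w hw
      rw [LinearMap.mem_ker] at hw
      set yv : Fin n → ℝ := WithLp.equiv 2 (Fin n → ℝ) y with hyv
      set wv : Fin n → ℝ := WithLp.equiv 2 (Fin n → ℝ) w with hwv
      have hw' : L *ᵥ wv = 0 := by
        have := congrArg (WithLp.equiv 2 (Fin n → ℝ)) hw
        simpa [Matrix.toEuclideanLin_apply, hwv] using this
      have hPw : P *ᵥ wv = wv := hPfix _ hw'
      have hdp : (yv - P *ᵥ yv) ⬝ᵥ wv = 0 := by
        rw [sub_dotProduct]
        have h8 : (P *ᵥ yv) ⬝ᵥ wv = wv ⬝ᵥ yv := by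
          rw [dotProduct_comm, Matrix.dotProduct_mulVec, ← Matrix.mulVec_transpose,
            hPT, hPw]
        rw [h8, dotProduct_comm, sub_self]
      have h10 : (inner ℝ (y - Matrix.toEuclideanLin P y) w : ℝ) = (yv - P *ᵥ yv) ⬝ᵥ wv := by
        rw [PiLp.inner_apply]
        simp only [RCLike.inner_apply, conj_trivial]
        rw [dotProduct_comm]
        rfl
      rw [h10, hdp]
  rw [hproj]
  exact hmain
end
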